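/- arXiv:2508.17628 — 6 statements merged into one kernel-verified Lean document; each statement's English description precedes it below -/
import Mathlib

section
/- Assume (f2). For all u₁, u₂ ∈ ℝ and t₁, t₂ > 0 with (u₁,t₁) ≠ (u₂,t₂), the effective nonlinearity satisfies the modulus-of-continuity estimate |f̄(u₁,t₁) − f̄(u₂,t₂)| ≤ 2 / ⌊ (1/κ) W( 1/(|u₁−u₂| + |t₁−t₂|) ) ⌋, whenever the floor in the denominator is at least 1; in particular, for every n ∈ ℕ one has |f̄(u₁,t₁) − f̄(u₂,t₂)| ≤ (1 + (|u₁−u₂| + |t₁−t₂|) κ n e^{κn}) / n. -/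
open Filter Topology

private lemma xexp_aux {x : ℝ} : Real.exp x - 1 ≤ x * Real.exp x := by
  have h := mul_le_mul_of_nonneg_right (Real.add_one_le_exp (-x)) (Real.exp_pos x).le
  rw [Real.exp_neg, inv_mul_cancel₀ (Real.exp_pos x).ne'] at h
  nlinarith

private lemma xexp_mono {a b : ℝ} (ha : 0 ≤ a) (hab : a ≤ b) :
    a * Real.exp a ≤ b * Real.exp b :=
  mul_le_mul hab (Real.exp_le_exp.2 hab) (Real.exp_pos a).le (le_trans ha hab)

/-- Modulus of continuity of the effective nonlinearity `f̄(u,t)` under (f2):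
the Lambert-`W` estimate, together with the explicit estimate for every `n ∈ ℕ`. -/
theorem stmt_2
    (f : ℝ → ℝ → ℝ → ℝ → ℝ) (κ : ℝ) (hκ : 0 < κ)
    (hcont : Continuous fun p : ℝ × ℝ × ℝ × ℝ => f p.1 p.2.1 p.2.2.1 p.2.2.2)
    (M : ℝ) (hM : ∀ r τ u t, |f r τ u t| ≤ M)
    (hlip : ∀ r₁ τ₁ u₁ t₁ r₂ τ₂ u₂ t₂,
      |f r₁ τ₁ u₁ t₁ - f r₂ τ₂ u₂ t₂| ≤
        κ * (|r₁ - r₂| + |τ₁ - τ₂| + |u₁ - u₂| + |t₁ - t₂|))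
    (hperr : ∀ r τ u t, f (r + 1) τ u t = f r τ u t)
    (hpert : ∀ r τ u t, f r (τ + 1) u t = f r τ u t)
    (hmono : ∀ r τ t u₁ u₂, u₁ ≤ u₂ → f r τ u₂ t ≤ f r τ u₁ t)
    (v : ℝ → ℝ → ℝ → ℝ → ℝ)
    (hv0 : ∀ u₀ t₀ c, v u₀ t₀ c 0 = c)
    (hv : ∀ u₀ t₀ c τ, HasDerivAt (v u₀ t₀ c) (f (v u₀ t₀ c τ) τ u₀ t₀) τ)
    (fbar : ℝ → ℝ → ℝ)
    (hfbar : ∀ u₀ t₀, fbar u₀ t₀ = ⨅ k : {k : ℝ // 0 < k}, v u₀ t₀ 0 (k : ℝ) / (k : ℝ))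
    (W : ℝ → ℝ)
    (hW : ∀ x ≥ (0 : ℝ), 0 ≤ W x ∧ W x * Real.exp (W x) = x) :
    ∀ u₁ u₂ t₁ t₂ : ℝ, 0 < t₁ → 0 < t₂ → (u₁, t₁) ≠ (u₂, t₂) →
      ((1 ≤ ⌊κ⁻¹ * W ((|u₁ - u₂| + |t₁ - t₂|)⁻¹)⌋ →
          |fbar u₁ t₁ - fbar u₂ t₂| ≤
            2 / (⌊κ⁻¹ * W ((|u₁ - u₂| + |t₁ - t₂|)⁻¹)⌋ : ℝ)) ∧
        ∀ n : ℕ, 0 < n →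
          |fbar u₁ t₁ - fbar u₂ t₂| ≤
            (1 + (|u₁ - u₂| + |t₁ - t₂|) * κ * n * Real.exp (κ * n)) / n) := by
  -- Lipschitz in the first variable
  have hLip : ∀ u t τ, LipschitzWith ⟨κ, hκ.le⟩ (fun x => f x τ u t) := by
    intro u t τ
    apply LipschitzWith.of_dist_le_mul
    intro x y
    simp only [Real.dist_eq]
    have := hlip x τ u t y τ u t
    exact (show _ ≤ κ * |x - y| by simpa using this)
  -- uniqueness of solutions of the frozen ODE
  have uniq : ∀ (u t : ℝ) (g h : ℝ → ℝ),
      (∀ τ, HasDerivAt g (f (g τ) τ u t) τ) →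
      (∀ τ, HasDerivAt h (f (h τ) τ u t) τ) →
      ∀ a b : ℝ, a ≤ b → g a = h a → g b = h b := by
    intro u t g h hg hh a b hab h0
    have := ODE_solution_unique (v := fun τ x => f x τ u t) (a := a) (b := b) (hLip u t)
      (fun s _ => (hg s).continuousAt.continuousWithinAt)
      (fun s _ => (hg s).hasDerivWithinAt)
      (fun s _ => (hh s).continuousAt.continuousWithinAt)
      (fun s _ => (hh s).hasDerivWithinAt) h0
    exact this (Set.right_mem_Icc.2 hab)
  -- comparison principle
  have comp : ∀ (u t c₁ c₂ : ℝ), c₁ ≤ c₂ → ∀ τ, 0 ≤ τ → v u t c₁ τ ≤ v u t c₂ τ := by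
    intro u t c₁ c₂ hc τ hτ
    by_contra hlt
    push_neg at hlt
    have hw : Continuous fun s => v u t c₂ s - v u t c₁ s := by
      apply Continuous.sub <;>
        exact continuous_iff_continuousAt.2 fun s => (hv u t _ s).continuousAt
    have h0 : (0:ℝ) ∈ Set.Icc (v u t c₂ τ - v u t c₁ τ) (v u t c₂ 0 - v u t c₁ 0) := by
      rw [hv0, hv0]
      constructor
      · linarith
      · linarith
    obtain ⟨t₀, ht₀mem, ht₀⟩ := intermediate_value_Icc' hτ hw.continuousOn h0
    have ht₀' : v u t c₂ t₀ - v u t c₁ t₀ = 0 := ht₀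
    have : v u t c₁ τ = v u t c₂ τ :=
      uniq u t (v u t c₁) (v u t c₂) (hv u t c₁) (hv u t c₂) t₀ τ ht₀mem.2 (by linarith)
    linarith
  -- integer periodicity of f in r
  have fperZ : ∀ (m : ℤ) (r τ u t : ℝ), f (r + m) τ u t = f r τ u t := by
    intro m
    induction m using Int.induction_on with
    | zero => simp
    | succ k ih =>
      intro r τ u t
      have e : r + (((k:ℤ) + 1 : ℤ) : ℝ) = (r + ((k:ℤ):ℝ)) + 1 := by push_cast; ring
      rw [e, hperr, ih]
    | pred k ih =>
      intro r τ u t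
      have e : r + ((-(k:ℤ) - 1 : ℤ) : ℝ) = (r - 1) + ((-(k:ℤ) : ℤ) : ℝ) := by push_cast; ring
      have e2 : r - 1 + 1 = r := by ring
      rw [e, ih (r - 1), ← hperr (r - 1) τ u t, e2]
  have fpertZ : ∀ (m : ℤ) (r τ u t : ℝ), f r (τ + m) u t = f r τ u t := by
    intro m
    induction m using Int.induction_on with
    | zero => simp
    | succ k ih =>
      intro r τ u t
      have e : τ + (((k:ℤ) + 1 : ℤ) : ℝ) = (τ + ((k:ℤ):ℝ)) + 1 := by push_cast; ring
      rw [e, hpert, ih]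
    | pred k ih =>
      intro r τ u t
      have e : τ + ((-(k:ℤ) - 1 : ℤ) : ℝ) = (τ - 1) + ((-(k:ℤ) : ℤ) : ℝ) := by push_cast; ring
      have e2 : τ - 1 + 1 = τ := by ring
      rw [e, ih r (τ - 1), ← hpert r (τ - 1) u t, e2]
  -- integer translation in r of solutions
  have transZ : ∀ (u t c : ℝ) (m : ℤ) (τ : ℝ), 0 ≤ τ →
      v u t (c + m) τ = v u t c τ + m := by
    intro u t c m τ hτ
    have hh : ∀ s : ℝ, HasDerivAt (fun s => v u t c s + (m:ℝ))
        (f (v u t c s + (m:ℝ)) s u t) s := by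
      intro s
      have := (hv u t c s).add_const (m:ℝ)
      rwa [← fperZ m (v u t c s) s u t] at this
    exact uniq u t (v u t (c + m)) (fun s => v u t c s + m) (hv u t (c + m)) hh 0 τ hτ
      (by show v u t (c + (m:ℝ)) 0 = v u t c 0 + (m:ℝ); rw [hv0, hv0])
  -- integer time shift: semigroup property
  have shiftZ : ∀ (u t c : ℝ) (N : ℕ) (s : ℝ), 0 ≤ s →
      v u t c ((N:ℝ) + s) = v u t (v u t c (N:ℝ)) s := by
    intro u t c N s hs
    have hg : ∀ s : ℝ, HasDerivAt (fun s => v u t c ((N:ℝ) + s))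
        (f (v u t c ((N:ℝ) + s)) s u t) s := by
      intro s
      have h1 : HasDerivAt (fun x : ℝ => (N:ℝ) + x) 1 s := (hasDerivAt_id s).const_add (N:ℝ)
      have hcomp := (hv u t c ((N:ℝ) + s)).comp s h1
      simp only [mul_one] at hcomp
      have heq : f (v u t c ((N:ℝ) + s)) ((N:ℝ) + s) u t
          = f (v u t c ((N:ℝ) + s)) s u t := by
        have h2 := fpertZ (N:ℤ) (v u t c ((N:ℝ) + s)) s u t
        push_cast at h2
        rw [add_comm s ((N:ℝ))] at h2
        exact h2
      rw [heq] at hcomp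
      exact hcomp
    exact uniq u t (fun s => v u t c ((N:ℝ) + s)) (v u t (v u t c (N:ℝ))) hg
      (hv u t (v u t c (N:ℝ))) 0 s hs
      (by show v u t c ((N:ℝ) + 0) = v u t (v u t c (N:ℝ)) 0; rw [add_zero, hv0])
  -- Gronwall: dependence on the frozen parameters
  have gron : ∀ (u₁ t₁ u₂ t₂ : ℝ) (T : ℝ), 0 ≤ T →
      |v u₁ t₁ 0 T - v u₂ t₂ 0 T| ≤
        (|u₁ - u₂| + |t₁ - t₂|) * (Real.exp (κ * T) - 1) := by
    intro u₁ t₁ u₂ t₂ T hT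
    set δ := |u₁ - u₂| + |t₁ - t₂| with hδ
    have hδ0 : 0 ≤ δ := by positivity
    have key := norm_le_gronwallBound_of_norm_deriv_right_le (E := ℝ) (a := 0) (b := T)
      (f := fun τ => v u₁ t₁ 0 τ - v u₂ t₂ 0 τ)
      (f' := fun τ => f (v u₁ t₁ 0 τ) τ u₁ t₁ - f (v u₂ t₂ 0 τ) τ u₂ t₂)
      (δ := 0) (K := κ) (ε := κ * δ)
      (by
        apply Continuous.continuousOn
        apply Continuous.sub <;>
          exact continuous_iff_continuousAt.2 fun s => (hv _ _ _ s).continuousAt)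
      (fun x _ => ((hv u₁ t₁ 0 x).sub (hv u₂ t₂ 0 x)).hasDerivWithinAt)
      (by
        show ‖v u₁ t₁ 0 0 - v u₂ t₂ 0 0‖ ≤ (0:ℝ)
        rw [hv0, hv0]
        simp)
      (by
        intro x _
        show ‖f (v u₁ t₁ 0 x) x u₁ t₁ - f (v u₂ t₂ 0 x) x u₂ t₂‖
          ≤ κ * ‖v u₁ t₁ 0 x - v u₂ t₂ 0 x‖ + κ * δ
        rw [Real.norm_eq_abs, Real.norm_eq_abs]
        have h1 := hlip (v u₁ t₁ 0 x) x u₁ t₁ (v u₂ t₂ 0 x) x u₂ t₂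
        simp only [sub_self, abs_zero] at h1
        calc |f (v u₁ t₁ 0 x) x u₁ t₁ - f (v u₂ t₂ 0 x) x u₂ t₂|
            ≤ κ * (|v u₁ t₁ 0 x - v u₂ t₂ 0 x| + 0 + |u₁ - u₂| + |t₁ - t₂|) := h1
          _ = κ * |v u₁ t₁ 0 x - v u₂ t₂ 0 x| + κ * δ := by rw [hδ]; ring)
      T (Set.right_mem_Icc.2 hT)
    rw [gronwallBound_of_K_ne_0 hκ.ne'] at key
    simp only [Real.norm_eq_abs, sub_zero] at key
    calc |v u₁ t₁ 0 T - v u₂ t₂ 0 T|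
        ≤ 0 * Real.exp (κ * T) + κ * δ / κ * (Real.exp (κ * T) - 1) := key
      _ = δ * (Real.exp (κ * T) - 1) := by field_simp; ring
  -- a priori linear bound
  have vbound : ∀ (u t c T : ℝ), 0 ≤ T → |v u t c T - c| ≤ M * T := by
    intro u t c T hT
    have key := norm_le_gronwallBound_of_norm_deriv_right_le (E := ℝ) (a := 0) (b := T)
      (f := fun τ => v u t c τ - c)
      (f' := fun τ => f (v u t c τ) τ u t)
      (δ := 0) (K := 0) (ε := M)
      (by
        apply Continuous.continuousOn
        apply Continuous.sub _ continuous_const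
        exact continuous_iff_continuousAt.2 fun s => (hv _ _ _ s).continuousAt)
      (fun x _ => ((hv u t c x).sub_const c).hasDerivWithinAt)
      (by
        show ‖v u t c 0 - c‖ ≤ (0:ℝ)
        rw [hv0]
        simp)
      (by
        intro x _
        show ‖f (v u t c x) x u t‖ ≤ 0 * ‖v u t c x - c‖ + M
        rw [Real.norm_eq_abs, zero_mul, zero_add]
        exact hM _ _ _ _)
      T (Set.right_mem_Icc.2 hT)
    rw [gronwallBound_K0] at key
    simpa [Real.norm_eq_abs] using key
  have hM0 : 0 ≤ M := le_trans (abs_nonneg _) (hM 0 0 0 0)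
  -- fbar is an inf of a bounded-below family
  have bdd : ∀ u t, BddBelow (Set.range fun k : {k : ℝ // 0 < k} => v u t 0 (k:ℝ) / (k:ℝ)) := by
    intro u t
    refine ⟨-M, ?_⟩
    rintro x ⟨⟨k, hk⟩, rfl⟩
    have h1 := vbound u t 0 k hk.le
    rw [sub_zero] at h1
    show -M ≤ v u t 0 k / k
    rw [le_div_iff₀ hk]
    have h2 : -(M * k) ≤ v u t 0 k := neg_le_of_abs_le h1
    linarith
  have fbar_le : ∀ u t k, 0 < k → fbar u t ≤ v u t 0 k / k := by
    intro u t k hk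
    rw [hfbar]
    exact ciInf_le (bdd u t) ⟨k, hk⟩
  have mul_le : ∀ u t s, 0 ≤ s → fbar u t * s ≤ v u t 0 s := by
    intro u t s hs
    rcases eq_or_lt_of_le hs with h | h
    · rw [← h, mul_zero, hv0]
    · have h1 := fbar_le u t s h
      calc fbar u t * s ≤ (v u t 0 s / s) * s := mul_le_mul_of_nonneg_right h1 hs
        _ = v u t 0 s := div_mul_cancel₀ _ h.ne'
  -- superadditivity along multiples of n
  have superadd : ∀ (u t : ℝ) (n : ℕ), 0 < n → ∀ (j : ℕ), 1 ≤ j →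
      (j:ℝ) * v u t 0 (n:ℝ) - j + 1 ≤ v u t 0 ((j:ℝ) * n) := by
    intro u t n hn j hj
    induction j with
    | zero => exact absurd hj (by norm_num)
    | succ i ih =>
      rcases Nat.eq_or_lt_of_le hj with h | h
      · have h1 : i = 0 := by omega
        subst h1
        norm_num
      · have hi : 1 ≤ i := by omega
        have ihi := ih hi
        have hcast : ((i:ℝ) + 1) * n = ((i*n : ℕ):ℝ) + (n:ℝ) := by push_cast; ring
        have hstep : v u t 0 (((i:ℝ) + 1) * n) = v u t (v u t 0 ((i*n : ℕ):ℝ)) (n:ℝ) := by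
          rw [hcast]
          exact shiftZ u t 0 (i*n) (n:ℝ) (Nat.cast_nonneg n)
        have hAeq : ((i*n : ℕ):ℝ) = (i:ℝ) * n := by push_cast; ring
        set A := v u t 0 ((i:ℝ) * (n:ℝ)) with hA
        have hfl : (⌊A⌋ : ℝ) ≤ A := Int.floor_le A
        have hcomp : v u t ((⌊A⌋ : ℝ)) (n:ℝ) ≤ v u t A (n:ℝ) :=
          comp u t _ _ hfl (n:ℝ) (Nat.cast_nonneg n)
        have htr : v u t ((⌊A⌋ : ℝ)) (n:ℝ) = v u t 0 (n:ℝ) + (⌊A⌋ : ℝ) := by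
          have h3 := transZ u t 0 ⌊A⌋ (n:ℝ) (Nat.cast_nonneg n)
          rwa [zero_add] at h3
        have hfl2 : A - 1 < (⌊A⌋ : ℝ) := Int.sub_one_lt_floor A
        have hfinal : v u t 0 (n:ℝ) + A - 1 ≤ v u t 0 (((i:ℝ) + 1) * n) := by
          rw [hstep, hAeq]
          rw [htr] at hcomp
          linarith
        push_cast
        push_cast at ihi
        linarith
  -- the one-sided estimate
  have onesided : ∀ u₁ t₁ u₂ t₂ : ℝ, ∀ n : ℕ, 0 < n →
      fbar u₁ t₁ - fbar u₂ t₂ ≤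
        1 / n + (|u₁ - u₂| + |t₁ - t₂|) * (κ * Real.exp (κ * n)) := by
    intro u₁ t₁ u₂ t₂ n hn
    set δ := |u₁ - u₂| + |t₁ - t₂| with hδdef
    have hδ0 : 0 ≤ δ := by positivity
    set E := κ * Real.exp (κ * n) with hEdef
    have hE0 : 0 ≤ E := by positivity
    have hn0 : (0:ℝ) < n := Nat.cast_pos.2 hn
    clear_value δ E
    -- Gronwall consequence: for 0 ≤ s ≤ n
    have gron' : ∀ s : ℝ, 0 ≤ s → s ≤ n →
        v u₁ t₁ 0 s ≤ v u₂ t₂ 0 s + δ * E * s := by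
      intro s hs hsn
      have h1 := gron u₁ t₁ u₂ t₂ s hs
      rw [← hδdef] at h1
      have h2 : Real.exp (κ * s) - 1 ≤ κ * s * Real.exp (κ * s) := xexp_aux
      have h3 : Real.exp (κ * s) ≤ Real.exp (κ * n) :=
        Real.exp_le_exp.2 (mul_le_mul_of_nonneg_left hsn hκ.le)
      have h4 : v u₁ t₁ 0 s - v u₂ t₂ 0 s ≤ δ * (Real.exp (κ * s) - 1) :=
        le_trans (le_abs_self _) h1
      have h6 : κ * s * Real.exp (κ * s) ≤ κ * s * Real.exp (κ * n) :=
        mul_le_mul_of_nonneg_left h3 (by positivity)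
      have h7 : E * s = κ * s * Real.exp (κ * n) := by rw [hEdef]; ring
      have h8 : Real.exp (κ * s) - 1 ≤ E * s := by linarith
      have h9 : δ * (Real.exp (κ * s) - 1) ≤ δ * (E * s) :=
        mul_le_mul_of_nonneg_left h8 hδ0
      have h10 : δ * (E * s) = δ * E * s := by ring
      linarith
    have key : ∀ k : ℝ, 0 < k →
        fbar u₁ t₁ ≤ v u₂ t₂ 0 k / k + (1 / n + δ * E) := by
      intro k hk
      rcases le_or_gt k n with hkn | hkn
      · -- small k
        have h1 := fbar_le u₁ t₁ k hk
        have h2 := gron' k hk.le hkn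
        have h3 : v u₁ t₁ 0 k / k ≤ v u₂ t₂ 0 k / k + δ * E := by
          rw [div_le_iff₀ hk]
          have expand : (v u₂ t₂ 0 k / k + δ * E) * k = v u₂ t₂ 0 k + δ * E * k := by
            field_simp
          rw [expand]
          linarith
        have h1n : (0:ℝ) ≤ 1 / n := by positivity
        linarith
      · -- large k
        set q : ℕ := ⌊k / n⌋₊ with hqdef
        have hq1 : 1 ≤ q := by
          rw [hqdef]
          apply Nat.le_floor
          rw [Nat.cast_one, le_div_iff₀ hn0, one_mul]
          exact hkn.le
        have hq0 : (0:ℝ) < q := by exact_mod_cast hq1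
        have hqk : (q:ℝ) * n ≤ k := by
          have h1 := Nat.floor_le (by positivity : (0:ℝ) ≤ k / n)
          rw [← hqdef] at h1
          calc (q:ℝ) * n ≤ (k / n) * n := mul_le_mul_of_nonneg_right h1 hn0.le
            _ = k := div_mul_cancel₀ _ hn0.ne'
        have hklt : k < ((q:ℝ) + 1) * n := by
          have h1 := Nat.lt_floor_add_one (k / n)
          rw [← hqdef] at h1
          calc k = (k / n) * n := (div_mul_cancel₀ _ hn0.ne').symm
            _ < ((q:ℝ) + 1) * n := by
                apply mul_lt_mul_of_pos_right _ hn0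
                exact_mod_cast h1
        set s : ℝ := k - (q:ℝ) * n with hsdef
        have hs0 : 0 ≤ s := by rw [hsdef]; linarith
        have hsn : s < n := by rw [hsdef]; nlinarith
        -- superadditivity for (u₂,t₂)
        set a₂ := v u₂ t₂ 0 (n:ℝ) with ha₂
        set A := v u₂ t₂ 0 ((q:ℝ) * n) with hA
        have hsup1 : (q:ℝ) * a₂ - q + 1 ≤ A := superadd u₂ t₂ n hn q hq1
        have hsplit : v u₂ t₂ 0 k = v u₂ t₂ A s := by
          have hcast : k = ((q*n : ℕ):ℝ) + s := by rw [hsdef]; push_cast; ring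
          have h1 := shiftZ u₂ t₂ 0 (q*n) s hs0
          rw [← hcast] at h1
          rw [h1, hA]
          congr 2
          push_cast
          ring
        have hfl : (⌊A⌋ : ℝ) ≤ A := Int.floor_le A
        have hcomp2 : v u₂ t₂ ((⌊A⌋ : ℝ)) s ≤ v u₂ t₂ A s := comp u₂ t₂ _ _ hfl s hs0
        have htr : v u₂ t₂ ((⌊A⌋ : ℝ)) s = v u₂ t₂ 0 s + (⌊A⌋ : ℝ) := by
          have h1 := transZ u₂ t₂ 0 ⌊A⌋ s hs0
          rwa [zero_add] at h1
        have hfl2 : A - 1 < (⌊A⌋ : ℝ) := Int.sub_one_lt_floor A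
        have hsup : v u₂ t₂ 0 s + (q:ℝ) * a₂ - q ≤ v u₂ t₂ 0 k := by
          rw [hsplit]
          rw [htr] at hcomp2
          linarith
        -- Gronwall at s and at n
        have hGs : v u₁ t₁ 0 s ≤ v u₂ t₂ 0 s + δ * E * s := gron' s hs0 hsn.le
        have hGn : v u₁ t₁ 0 (n:ℝ) ≤ a₂ + δ * E * n := by
          have h1 := gron' (n:ℝ) hn0.le le_rfl
          rw [← ha₂] at h1
          exact h1
        -- mediant bounds for fbar
        have hA1 : fbar u₁ t₁ * s ≤ v u₁ t₁ 0 s := mul_le u₁ t₁ s hs0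
        have hA2 : fbar u₁ t₁ * n ≤ v u₁ t₁ 0 (n:ℝ) := mul_le u₁ t₁ (n:ℝ) hn0.le
        -- combine
        have e1 : fbar u₁ t₁ * k = fbar u₁ t₁ * s + (q:ℝ) * (fbar u₁ t₁ * n) := by
          rw [hsdef]; ring
        have e2 : (q:ℝ) * (fbar u₁ t₁ * n) ≤ (q:ℝ) * (a₂ + δ * E * n) :=
          mul_le_mul_of_nonneg_left (by linarith) hq0.le
        have e2' : (q:ℝ) * (a₂ + δ * E * n) = (q:ℝ) * a₂ + (q:ℝ) * (δ * E * n) := by ring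
        have e3 : δ * E * s + (q:ℝ) * (δ * E * n) = δ * E * k := by
          rw [hsdef]; ring
        have hcombine : fbar u₁ t₁ * k ≤ v u₂ t₂ 0 k + (q:ℝ) + δ * E * k := by
          linarith
        have hq2 : (q:ℝ) ≤ k / n := by rw [le_div_iff₀ hn0]; exact hqk
        clear_value s q A a₂
        rw [← sub_le_iff_le_add, le_div_iff₀ hk]
        have e4 : (fbar u₁ t₁ - (1 / ↑n + δ * E)) * k
            = fbar u₁ t₁ * k - (k / n) - δ * E * k := by ring
        rw [e4]
        linarith
    rw [sub_le_iff_le_add]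
    rw [hfbar u₂ t₂, ← sub_le_iff_le_add']
    apply le_ciInf
    rintro ⟨k, hk⟩
    have h1 := key k hk
    show fbar u₁ t₁ - (1 / ↑n + δ * E) ≤ v u₂ t₂ 0 (k:ℝ) / (k:ℝ)
    linarith
  -- main statement
  intro u₁ u₂ t₁ t₂ ht₁ ht₂ hne
  set δ := |u₁ - u₂| + |t₁ - t₂| with hδdef
  have hδ0 : 0 < δ := by
    rcases eq_or_lt_of_le (by positivity : (0:ℝ) ≤ δ) with h | h
    · exfalso
      apply hne
      have h1 : |u₁ - u₂| = 0 := by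
        nlinarith [abs_nonneg (u₁ - u₂), abs_nonneg (t₁ - t₂)]
      have h2 : |t₁ - t₂| = 0 := by
        nlinarith [abs_nonneg (u₁ - u₂), abs_nonneg (t₁ - t₂)]
      have h3 := abs_eq_zero.1 h1
      have h4 := abs_eq_zero.1 h2
      rw [Prod.mk.injEq]
      constructor <;> linarith
    · exact h
  have main2 : ∀ n : ℕ, 0 < n →
      |fbar u₁ t₁ - fbar u₂ t₂| ≤ (1 + δ * κ * n * Real.exp (κ * n)) / n := by
    intro n hn
    have hn0 : (0:ℝ) < n := Nat.cast_pos.2 hn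
    have h1 := onesided u₁ t₁ u₂ t₂ n hn
    have h2 := onesided u₂ t₂ u₁ t₁ n hn
    rw [abs_sub_comm u₂ u₁, abs_sub_comm t₂ t₁, ← hδdef] at h2
    rw [← hδdef] at h1
    have heq : (1 + δ * κ * n * Real.exp (κ * n)) / n
        = 1 / n + δ * (κ * Real.exp (κ * n)) := by
      field_simp
    rw [heq, abs_sub_le_iff]
    constructor
    · linarith
    · linarith
  constructor
  · -- the Lambert-W estimate
    intro hfloor
    set m : ℤ := ⌊κ⁻¹ * W δ⁻¹⌋ with hmdef
    set n : ℕ := m.toNat with hndef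
    have hn : 0 < n := by omega
    have hcast : (n:ℝ) = (m:ℝ) := by
      rw [hndef]
      exact_mod_cast Int.toNat_of_nonneg (by omega : (0:ℤ) ≤ m)
    have hWδ := hW δ⁻¹ (by positivity)
    have hkn : κ * n ≤ W δ⁻¹ := by
      have h1 : (m:ℝ) ≤ κ⁻¹ * W δ⁻¹ := Int.floor_le _
      rw [hcast]
      calc κ * (m:ℝ) ≤ κ * (κ⁻¹ * W δ⁻¹) := mul_le_mul_of_nonneg_left h1 hκ.le
        _ = W δ⁻¹ := by field_simp
    have hkn0 : 0 ≤ κ * n := by positivity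
    have hxe : κ * n * Real.exp (κ * n) ≤ δ⁻¹ := by
      calc κ * n * Real.exp (κ * n) ≤ W δ⁻¹ * Real.exp (W δ⁻¹) := xexp_mono hkn0 hkn
        _ = δ⁻¹ := hWδ.2
    have hδxe : δ * κ * n * Real.exp (κ * n) ≤ 1 := by
      have h1 := mul_le_mul_of_nonneg_left hxe hδ0.le
      rw [mul_inv_cancel₀ hδ0.ne'] at h1
      nlinarith
    have h2 := main2 n hn
    have hn0 : (0:ℝ) < n := Nat.cast_pos.2 hn
    calc |fbar u₁ t₁ - fbar u₂ t₂| ≤ (1 + δ * κ * n * Real.exp (κ * n)) / n := h2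
      _ ≤ 2 / n := by
          gcongr
          linarith
      _ = 2 / (m:ℝ) := by rw [hcast]
  · exact main2
end

section
/- Let f₁, f₂ be 1-periodic bounded continuous functions on ℝ, let a₁, a₂ > 0, and for c = (c₁,c₂) ∈ ℝ² let (u^ε₁, u^ε₂) be the unique solution of the system u̇^ε₁ = −(a₁/ε)(u^ε₁ − u^ε₂) + f₁(t/ε), u̇^ε₂ = −(a₂/ε)(u^ε₂ − u^ε₁) + f₂(t/ε), with u^ε_i(0) = c_i. Then for all t > 0 and i ∈ {1,2}: |u^ε_i(t;c) − m_i(t)| ≤ ( (2a₂(a₁+a₂)+a_i)/(a₁+a₂)² ‖f₁‖_∞ + (2a₁(a₁+a₂)+a_i)/(a₁+a₂)² ‖f₂‖_∞ ) ε, where m_i(t) := (c₁a₂ + c₂a₁)/(a₁+a₂) + ((a₂ f̄₁ + a₁ f̄₂)/(a₁+a₂)) t + (a_i (c_i − c_j)/(a₁+a₂)) e^{−(a₁+a₂)t/ε} with j ≠ i, and f̄_i = ∫₀¹ f_i(s) ds. -/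
open Filter Topology

open MeasureTheory intervalIntegral

lemma avg_bound (f : ℝ → ℝ) (hc : Continuous f)
    (hp : Function.Periodic f 1) (M : ℝ) (hM : ∀ s, |f s| ≤ M) (T : ℝ) :
    |(∫ s in (0:ℝ)..T, f s) - T * ∫ s in (0:ℝ)..1, f s| ≤ 2 * M := by
  set μ := ∫ s in (0:ℝ)..1, f s with hμdef
  have hμ : |μ| ≤ M := by
    have := intervalIntegral.norm_integral_le_of_norm_le_const
      (a := (0:ℝ)) (b := 1) (C := M) (f := f) (fun x _ => hM x)
    simpa [hμdef] using this
  set g : ℝ → ℝ := fun s => f s - μ with hgdef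
  have hgc : Continuous g := hc.sub continuous_const
  have hgp : Function.Periodic g 1 := fun s => by simp [hgdef, hp s]
  have hint : ∀ t₁ t₂ : ℝ, IntervalIntegrable g volume t₁ t₂ :=
    fun t₁ t₂ => hgc.intervalIntegrable t₁ t₂
  have hzero : (∫ s in (0:ℝ)..1, g s) = 0 := by
    rw [intervalIntegral.integral_sub (hc.intervalIntegrable _ _) intervalIntegrable_const]
    simp [hμdef]
  have hdecomp : (∫ s in (0:ℝ)..T, g s) = ∫ s in (0:ℝ)..(Int.fract T), g s := by
    have hfr : Int.fract (T / 1) * 1 + ⌊T / 1⌋ • (1:ℝ) = T :=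
      Int.fract_div_mul_self_add_zsmul_eq 1 T one_ne_zero
    have h1 : (∫ s in (0:ℝ)..T, g s)
        = (∫ s in (0:ℝ)..(Int.fract T), g s)
          + ∫ s in (Int.fract T)..(Int.fract T + ⌊T⌋ • (1:ℝ)), g s := by
      rw [integral_add_adjacent_intervals (hint _ _) (hint _ _)]
      congr 1
      simpa using hfr
    rw [h1, hgp.intervalIntegral_add_zsmul_eq ⌊T⌋ (Int.fract T) hint,
      hgp.intervalIntegral_add_eq (Int.fract T) 0]
    simp [hzero]
  have hsub : (∫ s in (0:ℝ)..T, f s) - T * μ = ∫ s in (0:ℝ)..T, g s := by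
    rw [intervalIntegral.integral_sub (hc.intervalIntegrable _ _) intervalIntegrable_const]
    simp [mul_comm]
  have hbd : |∫ s in (0:ℝ)..(Int.fract T), g s| ≤ (2*M) * |Int.fract T - 0| := by
    have hgb : ∀ x ∈ Set.uIoc (0:ℝ) (Int.fract T), ‖g x‖ ≤ 2 * M := by
      intro x _
      have h1 : |g x| ≤ |f x| + |μ| := abs_sub (f x) μ
      have h2 := hM x
      simp only [Real.norm_eq_abs]
      linarith
    simpa using intervalIntegral.norm_integral_le_of_norm_le_const hgb
  have hM0 : 0 ≤ M := le_trans (abs_nonneg _) (hM 0)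
  have hfr1 : |Int.fract T - 0| ≤ 1 := by
    have h0 := Int.fract_nonneg T
    have h1 := Int.fract_lt_one T
    rw [sub_zero, abs_of_nonneg h0]; linarith
  calc |(∫ s in (0:ℝ)..T, f s) - T * μ| = |∫ s in (0:ℝ)..(Int.fract T), g s| := by
        rw [hsub, hdecomp]
    _ ≤ (2*M) * |Int.fract T - 0| := hbd
    _ ≤ 2 * M := by nlinarith

set_option maxHeartbeats 1000000 in
/-- Weakly coupled system with fast switching rates: explicit `O(ε)` rate toward
the weighted averages `m_i(t)`, for both components. -/
theorem stmt_8
    (f₁ f₂ : ℝ → ℝ) (hc₁ : Continuous f₁) (hc₂ : Continuous f₂)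
    (hp₁ : ∀ s, f₁ (s + 1) = f₁ s) (hp₂ : ∀ s, f₂ (s + 1) = f₂ s)
    (M₁ M₂ : ℝ) (hM₁ : ∀ s, |f₁ s| ≤ M₁) (hM₂ : ∀ s, |f₂ s| ≤ M₂)
    (a₁ a₂ : ℝ) (ha₁ : 0 < a₁) (ha₂ : 0 < a₂)
    (c₁ c₂ : ℝ) (ε : ℝ) (hε : 0 < ε)
    (u₁ u₂ : ℝ → ℝ) (hu₁0 : u₁ 0 = c₁) (hu₂0 : u₂ 0 = c₂)
    (hu₁ : ∀ t, HasDerivAt u₁ (-(a₁ / ε) * (u₁ t - u₂ t) + f₁ (t / ε)) t)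
    (hu₂ : ∀ t, HasDerivAt u₂ (-(a₂ / ε) * (u₂ t - u₁ t) + f₂ (t / ε)) t) :
    ∀ t > (0 : ℝ),
      |u₁ t - ((c₁ * a₂ + c₂ * a₁) / (a₁ + a₂)
          + ((a₂ * (∫ s in (0 : ℝ)..1, f₁ s) + a₁ * (∫ s in (0 : ℝ)..1, f₂ s))
              / (a₁ + a₂)) * t
          + (a₁ * (c₁ - c₂) / (a₁ + a₂)) * Real.exp (-((a₁ + a₂) * t / ε)))|
        ≤ ((2 * a₂ * (a₁ + a₂) + a₁) / (a₁ + a₂) ^ 2 * M₁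
            + (2 * a₁ * (a₁ + a₂) + a₁) / (a₁ + a₂) ^ 2 * M₂) * ε ∧
      |u₂ t - ((c₁ * a₂ + c₂ * a₁) / (a₁ + a₂)
          + ((a₂ * (∫ s in (0 : ℝ)..1, f₁ s) + a₁ * (∫ s in (0 : ℝ)..1, f₂ s))
              / (a₁ + a₂)) * t
          + (a₂ * (c₂ - c₁) / (a₁ + a₂)) * Real.exp (-((a₁ + a₂) * t / ε)))|
        ≤ ((2 * a₂ * (a₁ + a₂) + a₂) / (a₁ + a₂) ^ 2 * M₁
            + (2 * a₁ * (a₁ + a₂) + a₂) / (a₁ + a₂) ^ 2 * M₂) * ε := by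
  intro t ht
  have hεne : ε ≠ 0 := hε.ne'
  set l : ℝ := a₁ + a₂ with hldef
  have hl : 0 < l := by positivity
  have hlne : l ≠ 0 := hl.ne'
  have hM₁0 : 0 ≤ M₁ := le_trans (abs_nonneg _) (hM₁ 0)
  have hM₂0 : 0 ≤ M₂ := le_trans (abs_nonneg _) (hM₂ 0)
  set F₁ : ℝ := ∫ s in (0:ℝ)..1, f₁ s with hF₁def
  set F₂ : ℝ := ∫ s in (0:ℝ)..1, f₂ s with hF₂def
  -- continuity facts
  have hdive : Continuous fun s : ℝ => s / ε := continuous_id.div_const ε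
  have hcf₁ : Continuous fun s : ℝ => f₁ (s / ε) := hc₁.comp hdive
  have hcf₂ : Continuous fun s : ℝ => f₂ (s / ε) := hc₂.comp hdive
  have hcexp : Continuous fun s : ℝ => Real.exp (l * s / ε) :=
    Real.continuous_exp.comp ((continuous_const.mul continuous_id).div_const ε)
  -- the conserved-direction variable v = a₂ u₁ + a₁ u₂
  have hv : ∀ x : ℝ, HasDerivAt (fun s => a₂ * u₁ s + a₁ * u₂ s)
      (a₂ * f₁ (x / ε) + a₁ * f₂ (x / ε)) x := by
    intro x
    have h := ((hu₁ x).const_mul a₂).add ((hu₂ x).const_mul a₁)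
    refine h.congr_deriv ?_
    ring
  have hvint : (∫ s in (0:ℝ)..t, (a₂ * f₁ (s / ε) + a₁ * f₂ (s / ε)))
      = (a₂ * u₁ t + a₁ * u₂ t) - (a₂ * c₁ + a₁ * c₂) := by
    have h := intervalIntegral.integral_eq_sub_of_hasDerivAt
      (f := fun s => a₂ * u₁ s + a₁ * u₂ s) (fun x _ => hv x)
      (((continuous_const.mul hcf₁).add (continuous_const.mul hcf₂)).intervalIntegrable 0 t)
    rw [h]; simp only [hu₁0, hu₂0]
  have hsplit : (∫ s in (0:ℝ)..t, (a₂ * f₁ (s / ε) + a₁ * f₂ (s / ε)))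
      = a₂ * (∫ s in (0:ℝ)..t, f₁ (s / ε)) + a₁ * (∫ s in (0:ℝ)..t, f₂ (s / ε)) := by
    rw [intervalIntegral.integral_add ((hcf₁.intervalIntegrable 0 t).const_mul a₂)
      ((hcf₂.intervalIntegrable 0 t).const_mul a₁),
      intervalIntegral.integral_const_mul, intervalIntegral.integral_const_mul]
  -- averaging bounds
  have hP : ∀ (f : ℝ → ℝ), Continuous f → (∀ s, f (s + 1) = f s) → ∀ M : ℝ, (∀ s, |f s| ≤ M) →
      |(∫ s in (0:ℝ)..t, f (s / ε)) - t * ∫ s in (0:ℝ)..1, f s| ≤ 2 * M * ε := by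
    intro f hc hp M hM
    have h1 : (∫ s in (0:ℝ)..t, f (s / ε)) = ε * ∫ s in (0:ℝ)..(t / ε), f s := by
      rw [intervalIntegral.integral_comp_div (f := f) hεne]
      simp
    have h2 := avg_bound f hc hp M hM (t / ε)
    have heq : (∫ s in (0:ℝ)..t, f (s / ε)) - t * ∫ s in (0:ℝ)..1, f s
        = ε * ((∫ s in (0:ℝ)..(t / ε), f s) - (t / ε) * ∫ s in (0:ℝ)..1, f s) := by
      rw [h1]; field_simp
    rw [heq, abs_mul, abs_of_pos hε]
    nlinarith [abs_nonneg ((∫ s in (0:ℝ)..(t / ε), f s) - (t / ε) * ∫ s in (0:ℝ)..1, f s)]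
  have hP₁ := hP f₁ hc₁ hp₁ M₁ hM₁
  have hP₂ := hP f₂ hc₂ hp₂ M₂ hM₂
  -- the A term
  set A : ℝ := (a₂ * u₁ t + a₁ * u₂ t) - (a₂ * c₁ + a₁ * c₂) - (a₂ * F₁ + a₁ * F₂) * t
    with hAdef
  have hAeq : A = a₂ * ((∫ s in (0:ℝ)..t, f₁ (s / ε)) - t * F₁)
      + a₁ * ((∫ s in (0:ℝ)..t, f₂ (s / ε)) - t * F₂) := by
    rw [hAdef, ← hvint, hsplit]; ring
  have hA : |A| ≤ 2 * a₂ * M₁ * ε + 2 * a₁ * M₂ * ε := by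
    rw [hAeq]
    calc |a₂ * ((∫ s in (0:ℝ)..t, f₁ (s / ε)) - t * F₁)
          + a₁ * ((∫ s in (0:ℝ)..t, f₂ (s / ε)) - t * F₂)|
        ≤ |a₂ * ((∫ s in (0:ℝ)..t, f₁ (s / ε)) - t * F₁)|
          + |a₁ * ((∫ s in (0:ℝ)..t, f₂ (s / ε)) - t * F₂)| := abs_add_le _ _
      _ = a₂ * |(∫ s in (0:ℝ)..t, f₁ (s / ε)) - t * F₁|
          + a₁ * |(∫ s in (0:ℝ)..t, f₂ (s / ε)) - t * F₂| := by
          rw [abs_mul, abs_mul, abs_of_pos ha₁, abs_of_pos ha₂]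
      _ ≤ a₂ * (2 * M₁ * ε) + a₁ * (2 * M₂ * ε) :=
          add_le_add (mul_le_mul_of_nonneg_left hP₁ ha₂.le)
            (mul_le_mul_of_nonneg_left hP₂ ha₁.le)
      _ = 2 * a₂ * M₁ * ε + 2 * a₁ * M₂ * ε := by ring
  -- the exponential direction w = u₁ - u₂
  have he : ∀ x : ℝ, HasDerivAt (fun s => Real.exp (l * s / ε))
      (Real.exp (l * x / ε) * (l / ε)) x := by
    intro x
    have h0 : HasDerivAt (fun s : ℝ => l * s / ε) (l / ε) x := by
      simpa using ((hasDerivAt_id x).const_mul l).div_const ε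
    exact h0.exp
  have hW : ∀ x : ℝ, HasDerivAt (fun s => (u₁ s - u₂ s) * Real.exp (l * s / ε))
      (Real.exp (l * x / ε) * (f₁ (x / ε) - f₂ (x / ε))) x := by
    intro x
    have h := ((hu₁ x).sub (hu₂ x)).mul (he x)
    refine h.congr_deriv ?_
    simp only [Pi.sub_apply]
    rw [hldef]
    ring
  set I : ℝ := ∫ s in (0:ℝ)..t, Real.exp (l * s / ε) * (f₁ (s / ε) - f₂ (s / ε)) with hIdef
  have hWint : I = (u₁ t - u₂ t) * Real.exp (l * t / ε) - (c₁ - c₂) := by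
    have h := intervalIntegral.integral_eq_sub_of_hasDerivAt
      (f := fun s => (u₁ s - u₂ s) * Real.exp (l * s / ε)) (fun x _ => hW x)
      ((hcexp.mul (hcf₁.sub hcf₂)).intervalIntegrable 0 t)
    rw [hIdef, h]; simp [hu₁0, hu₂0]
  have hexpint : (∫ s in (0:ℝ)..t, Real.exp (l * s / ε))
      = (ε / l) * (Real.exp (l * t / ε) - 1) := by
    have hprim : ∀ x : ℝ, HasDerivAt (fun s => (ε / l) * Real.exp (l * s / ε))
        (Real.exp (l * x / ε)) x := by
      intro x
      have h := (he x).const_mul (ε / l)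
      refine h.congr_deriv ?_
      field_simp
    rw [intervalIntegral.integral_eq_sub_of_hasDerivAt (fun x _ => hprim x)
      (hcexp.intervalIntegrable 0 t)]
    simp [mul_sub]
  have hI : |I| ≤ (M₁ + M₂) * ((ε / l) * (Real.exp (l * t / ε) - 1)) := by
    calc |I| ≤ ∫ s in (0:ℝ)..t, |Real.exp (l * s / ε) * (f₁ (s / ε) - f₂ (s / ε))| :=
        intervalIntegral.abs_integral_le_integral_abs ht.le
      _ ≤ ∫ s in (0:ℝ)..t, (M₁ + M₂) * Real.exp (l * s / ε) := by
          apply intervalIntegral.integral_mono_on ht.le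
            ((hcexp.mul (hcf₁.sub hcf₂)).abs.intervalIntegrable 0 t)
            ((continuous_const.mul hcexp).intervalIntegrable 0 t)
          intro x _
          simp only [Pi.mul_apply, Pi.sub_apply]
          rw [abs_mul, abs_of_pos (Real.exp_pos _)]
          rw [mul_comm (M₁ + M₂)]
          gcongr
          calc |f₁ (x / ε) - f₂ (x / ε)| ≤ |f₁ (x / ε)| + |f₂ (x / ε)| := abs_sub _ _
            _ ≤ M₁ + M₂ := add_le_add (hM₁ _) (hM₂ _)
      _ = (M₁ + M₂) * ((ε / l) * (Real.exp (l * t / ε) - 1)) := by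
          rw [intervalIntegral.integral_const_mul, hexpint]
  set B : ℝ := (u₁ t - u₂ t) - (c₁ - c₂) * Real.exp (-(l * t / ε)) with hBdef
  have hBeq : B = I * Real.exp (-(l * t / ε)) := by
    have hEpos := Real.exp_pos (l * t / ε)
    rw [hBdef, Real.exp_neg]
    have hform : u₁ t - u₂ t = (I + (c₁ - c₂)) / Real.exp (l * t / ε) := by
      rw [eq_div_iff hEpos.ne']
      linarith [hWint]
    rw [hform]
    field_simp
    ring
  have hB : |B| ≤ (M₁ + M₂) * (ε / l) := by
    have hEpos := Real.exp_pos (l * t / ε)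
    have hE1 : 1 ≤ Real.exp (l * t / ε) := by
      apply Real.one_le_exp
      positivity
    have hkey : Real.exp (-(l * t / ε)) * (Real.exp (l * t / ε) - 1)
        = 1 - Real.exp (-(l * t / ε)) := by
      rw [mul_sub, ← Real.exp_add]
      simp
    have hnegpos := Real.exp_pos (-(l * t / ε))
    calc |B| = |I| * Real.exp (-(l * t / ε)) := by
          rw [hBeq, abs_mul, abs_of_pos hnegpos]
      _ ≤ ((M₁ + M₂) * ((ε / l) * (Real.exp (l * t / ε) - 1))) * Real.exp (-(l * t / ε)) := by
          apply mul_le_mul_of_nonneg_right hI hnegpos.le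
      _ = (M₁ + M₂) * (ε / l) * (1 - Real.exp (-(l * t / ε))) := by
          rw [show ((M₁ + M₂) * ((ε / l) * (Real.exp (l * t / ε) - 1))) * Real.exp (-(l * t / ε))
            = (M₁ + M₂) * (ε / l) * (Real.exp (-(l * t / ε)) * (Real.exp (l * t / ε) - 1)) by ring,
            hkey]
      _ ≤ (M₁ + M₂) * (ε / l) := by
          have h1 : (0:ℝ) ≤ (M₁ + M₂) * (ε / l) := by positivity
          nlinarith
  -- final assembly
  have hbound : ∀ a : ℝ, 0 < a →
      (|A| + a * |B|) / l
        ≤ ((2 * a₂ * l + a) / l ^ 2 * M₁ + (2 * a₁ * l + a) / l ^ 2 * M₂) * ε := by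
    intro a ha
    have step : |A| + a * |B| ≤ (2 * a₂ * M₁ * ε + 2 * a₁ * M₂ * ε)
        + a * ((M₁ + M₂) * (ε / l)) :=
      add_le_add hA (mul_le_mul_of_nonneg_left hB ha.le)
    have heq : ((2 * a₂ * l + a) / l ^ 2 * M₁ + (2 * a₁ * l + a) / l ^ 2 * M₂) * ε
        = ((2 * a₂ * M₁ * ε + 2 * a₁ * M₂ * ε) + a * ((M₁ + M₂) * (ε / l))) / l := by
      field_simp
      ring
    rw [heq]
    gcongr
  constructor
  · have hrep : u₁ t - ((c₁ * a₂ + c₂ * a₁) / l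
        + ((a₂ * F₁ + a₁ * F₂) / l) * t
        + (a₁ * (c₁ - c₂) / l) * Real.exp (-(l * t / ε)))
        = (A + a₁ * B) / l := by
      rw [hAdef, hBdef]
      field_simp
      ring
    rw [hrep, abs_div, abs_of_pos hl]
    calc |A + a₁ * B| / l ≤ (|A| + a₁ * |B|) / l := by
          gcongr
          calc |A + a₁ * B| ≤ |A| + |a₁ * B| := abs_add_le _ _
            _ = |A| + a₁ * |B| := by rw [abs_mul, abs_of_pos ha₁]
      _ ≤ ((2 * a₂ * l + a₁) / l ^ 2 * M₁ + (2 * a₁ * l + a₁) / l ^ 2 * M₂) * ε :=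
          hbound a₁ ha₁
  · have hrep : u₂ t - ((c₁ * a₂ + c₂ * a₁) / l
        + ((a₂ * F₁ + a₁ * F₂) / l) * t
        + (a₂ * (c₂ - c₁) / l) * Real.exp (-(l * t / ε)))
        = (A - a₂ * B) / l := by
      rw [hAdef, hBdef]
      field_simp
      ring
    rw [hrep, abs_div, abs_of_pos hl]
    calc |A - a₂ * B| / l ≤ (|A| + a₂ * |B|) / l := by
          gcongr
          calc |A - a₂ * B| ≤ |A| + |a₂ * B| := abs_sub _ _
            _ = |A| + a₂ * |B| := by rw [abs_mul, abs_of_pos ha₂]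
      _ ≤ ((2 * a₂ * l + a₂) / l ^ 2 * M₁ + (2 * a₁ * l + a₂) / l ^ 2 * M₂) * ε :=
          hbound a₂ ha₂
end

section
/- Assume n > 1, (f4) and (f5), and let φ ∈ Lip(ℝⁿ). Let V^ε be the weak solution of V^ε_t + f(x/ε, t/ε)·DV^ε = 0 with V^ε(x,0) = φ(x), given by the method of characteristics: V^ε(x,t) = φ(x₀) where x₀ ∈ ℝⁿ is the unique point with u^ε(t;x₀) = x, and u^ε(·;x₀) solves u̇^ε = f(u^ε/ε, t/ε), u^ε(0;x₀) = x₀. Then there exists a vector ξ̄ ∈ ℝⁿ such that for all x ∈ ℝⁿ, t > 0 and ε > 0: |V^ε(x,t) − φ(x − ξ̄ t)| ≤ ‖Dφ‖_∞ (1 + C₀ + 2 max_{1≤i≤n} ‖f_i‖_∞) ε. -/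
open Filter Topology

lemma stmt9_arch_le {a b C : ℝ} (h : ∀ k : ℕ, 1 ≤ k → a ≤ b + C / k) : a ≤ b := by
  have ht : Tendsto (fun k : ℕ => b + C / k) atTop (𝓝 (b + 0)) :=
    tendsto_const_nhds.add (tendsto_const_div_atTop_nhds_zero_nat C)
  rw [add_zero] at ht
  exact ge_of_tendsto ht (Filter.eventually_atTop.2 ⟨1, fun k hk => h k hk⟩)

lemma stmt9_ode_uniq {n : ℕ} {F : (Fin n → ℝ) → ℝ → (Fin n → ℝ)} {κ : ℝ}
    (hlip : ∀ r₁ τ₁ r₂ τ₂, ‖F r₁ τ₁ - F r₂ τ₂‖ ≤ κ * (‖r₁ - r₂‖ + |τ₁ - τ₂|))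
    {g₁ g₂ : ℝ → (Fin n → ℝ)}
    (h₁ : ∀ s, HasDerivAt g₁ (F (g₁ s) s) s)
    (h₂ : ∀ s, HasDerivAt g₂ (F (g₂ s) s) s)
    (h0 : g₁ 0 = g₂ 0) (s : ℝ) : g₁ s = g₂ s := by
  have hK : ∀ τ : ℝ, LipschitzWith κ.toNNReal (fun r => F r τ) := fun τ =>
    LipschitzWith.of_dist_le' fun r₁ r₂ => by
      have := hlip r₁ τ r₂ τ
      simp only [sub_self, abs_zero, add_zero] at this
      simpa [dist_eq_norm] using this
  have hmem : s ∈ Set.Ioo (-(|s|+1)) (|s|+1) :=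
    ⟨by nlinarith [neg_abs_le s, abs_nonneg s], by nlinarith [le_abs_self s]⟩
  have h0mem : (0:ℝ) ∈ Set.Ioo (-(|s|+1)) (|s|+1) := by
    constructor <;> nlinarith [abs_nonneg s]
  exact ODE_solution_unique_of_mem_Ioo
    (v := fun τ r => F r τ) (s := fun _ => Set.univ)
    (fun t _ => (hK t).lipschitzOnWith) h0mem
    (fun t _ => ⟨h₁ t, Set.mem_univ _⟩) (fun t _ => ⟨h₂ t, Set.mem_univ _⟩) h0 hmem

/-- Homogenization of the linear transport equation in dimension `n > 1`,
under (f4) and (f5): with the solution given by characteristics,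
`|V^ε(x,t) - φ(x - ξ̄ t)| ≤ ‖Dφ‖_∞ (1 + C₀ + 2 maxᵢ ‖f_i‖_∞) ε`. -/
theorem stmt_9
    (n : ℕ) (hn : 1 < n)
    (f : (Fin n → ℝ) → ℝ → (Fin n → ℝ)) (κ : ℝ)
    (hcont : Continuous fun p : (Fin n → ℝ) × ℝ => f p.1 p.2)
    (hlip : ∀ r₁ τ₁ r₂ τ₂, ‖f r₁ τ₁ - f r₂ τ₂‖ ≤ κ * (‖r₁ - r₂‖ + |τ₁ - τ₂|))
    (hper : ∀ (r : Fin n → ℝ) (τ : ℝ) (l : Fin n → ℤ) (k : ℤ),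
      f (r + fun i => (l i : ℝ)) (τ + k) = f r τ)
    (M : Fin n → ℝ) (hM : ∀ r τ i, |f r τ i| ≤ M i)
    (v : (Fin n → ℝ) → ℝ → (Fin n → ℝ))
    (hv0 : ∀ c, v c 0 = c)
    (hv : ∀ c τ, HasDerivAt (v c) (f (v c τ) τ) τ)
    (C₀ : ℝ) (hC₀ : 0 < C₀)
    (hf5 : ∀ c₁ c₂ : Fin n → ℝ, c₁ - c₂ ∈ Set.Icc (0 : Fin n → ℝ) 1 →
      ∀ i, ∀ τ > (0 : ℝ), v c₂ τ i - v c₁ τ i ≤ C₀)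
    (φ : (Fin n → ℝ) → ℝ) (L : ℝ)
    (hφ : ∀ x y, |φ x - φ y| ≤ L * ‖x - y‖)
    (V : ℝ → (Fin n → ℝ) → ℝ → ℝ)
    (hV : ∀ ε > (0 : ℝ), ∀ (x : Fin n → ℝ) (t : ℝ),
      ∃ (x₀ : Fin n → ℝ) (u : ℝ → (Fin n → ℝ)),
        u 0 = x₀ ∧ (∀ s, HasDerivAt u (f (ε⁻¹ • u s) (s / ε)) s) ∧
        u t = x ∧ V ε x t = φ x₀) :
    ∃ ξbar : Fin n → ℝ, ∀ ε > (0 : ℝ), ∀ x : Fin n → ℝ, ∀ t > (0 : ℝ),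
      |V ε x t - φ (x - t • ξbar)| ≤ L * (1 + C₀ + 2 * ⨆ i, M i) * ε := by
  set C : ℝ := C₀ + 1 with hCdef
  have hCpos : (0:ℝ) < C := by simp only [hCdef]; linarith
  have hMnn : ∀ i, 0 ≤ M i := fun i => le_trans (abs_nonneg _) (hM 0 0 i)
  have hvi : ∀ (c : Fin n → ℝ) (i : Fin n) (τ : ℝ),
      HasDerivAt (fun τ => v c τ i) (f (v c τ) τ i) τ :=
    fun c i τ => (hasDerivAt_pi.1 (hv c τ)) i
  -- MVT bound
  have mvt : ∀ (c : Fin n → ℝ) (i : Fin n) (σ τ : ℝ), σ ≤ τ →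
      |v c τ i - v c σ i| ≤ M i * (τ - σ) := by
    intro c i σ τ hστ
    have := norm_image_sub_le_of_norm_deriv_le_segment'
      (f := fun τ => v c τ i) (f' := fun τ => f (v c τ) τ i) (a := σ) (b := τ)
      (fun x _ => (hvi c i x).hasDerivWithinAt)
      (fun x _ => by simpa [Real.norm_eq_abs] using hM (v c x) x i) τ ⟨hστ, le_rfl⟩
    simpa [Real.norm_eq_abs] using this
  -- uniqueness
  have uniq : ∀ (g₁ g₂ : ℝ → (Fin n → ℝ)),
      (∀ s, HasDerivAt g₁ (f (g₁ s) s) s) → (∀ s, HasDerivAt g₂ (f (g₂ s) s) s) →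
      g₁ 0 = g₂ 0 → ∀ s, g₁ s = g₂ s := fun g₁ g₂ a b c => stmt9_ode_uniq hlip a b c
  -- integer space translation
  have transl : ∀ (c : Fin n → ℝ) (l : Fin n → ℤ) (τ : ℝ),
      v (c + fun i => (l i : ℝ)) τ = v c τ + fun i => (l i : ℝ) := by
    intro c l τ
    refine uniq (v (c + fun i => (l i : ℝ))) (fun τ => v c τ + fun i => (l i : ℝ))
      (hv _) (fun s => ?_) (by simp [hv0]) τ
    have h1 : HasDerivAt (fun τ => v c τ + fun i => (l i:ℝ)) (f (v c s) s) s :=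
      (hv c s).add_const _
    have h2 : f ((v c s) + fun i => (l i:ℝ)) s = f (v c s) s := by
      have := hper (v c s) s l 0
      simpa using this
    rwa [← h2] at h1
  -- nat time shift
  have tshift : ∀ (c : Fin n → ℝ) (m : ℕ) (τ : ℝ), v c (τ + m) = v (v c m) τ := by
    intro c m τ
    refine (uniq (fun τ => v c (τ + m)) (v (v c m)) (fun s => ?_) (hv _)
      (by simp [hv0]) τ)
    have h1 : HasDerivAt (fun τ => v c (τ + m)) (f (v c (s + m)) (s + m)) s := by
      simpa using HasDerivAt.comp_add_const (f := v c) s (m:ℝ) (hv c (s + m))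
    have h2 := hper (v c (s + m)) s (fun _ => (0:ℤ)) (m : ℤ)
    rw [show (v c (s + (m:ℝ)) + fun _ : Fin n => ((0:ℤ):ℝ)) = v c (s + (m:ℝ)) from by
      funext j; simp] at h2
    push_cast at h2
    rwa [h2] at h1
  -- two-sided comparison estimate
  have keybd : ∀ (c c' : Fin n → ℝ) (i : Fin n), ∀ τ > (0:ℝ),
      |v c' τ i - v c τ i - (c' i - c i)| ≤ C := by
    intro c c' i τ hτ
    set l : Fin n → ℤ := fun j => ⌊c' j - c j⌋ with hl
    set e : Fin n → ℝ := fun j => Int.fract (c' j - c j) with he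
    have hce : c' = (c + e) + fun j => (l j : ℝ) := by
      funext j
      simp only [Pi.add_apply, he, hl, Int.fract]
      ring
    have h1 : v c' τ i = v (c + e) τ i + l i := by
      rw [hce, transl]; simp
    have hone : v (c + 1) τ i = v c τ i + 1 := by
      have h2 : c + 1 = c + fun j => (((fun _ => (1:ℤ)) j : ℤ) : ℝ) := by
        funext j; simp
      rw [h2, transl]; simp
    have hub : v (c + e) τ i - v c τ i ≤ C₀ + 1 := by
      have hmem : (c + 1) - (c + e) ∈ Set.Icc (0 : Fin n → ℝ) 1 := by
        rw [Set.mem_Icc]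
        constructor <;> intro j <;>
          simp only [Pi.sub_apply, Pi.add_apply, Pi.one_apply, Pi.zero_apply, he]
        · have := Int.fract_lt_one (c' j - c j); linarith
        · have := Int.fract_nonneg (c' j - c j); linarith
      have := hf5 (c + 1) (c + e) hmem i τ hτ
      linarith [hone ▸ this]
    have hlb : -C₀ ≤ v (c + e) τ i - v c τ i := by
      have hmem : (c + e) - c ∈ Set.Icc (0 : Fin n → ℝ) 1 := by
        rw [Set.mem_Icc]
        constructor <;> intro j <;>
          simp only [Pi.sub_apply, Pi.add_apply, Pi.zero_apply, Pi.one_apply, he,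
            add_sub_cancel_left]
        · exact Int.fract_nonneg _
        · exact le_of_lt (Int.fract_lt_one _)
      have := hf5 (c + e) c hmem i τ hτ
      linarith
    have hfr0 : 0 ≤ e i := Int.fract_nonneg _
    have hfr1 : e i < 1 := Int.fract_lt_one _
    have hsplit : c' i - c i = l i + e i := by
      simp only [he, hl, Int.fract]; ring
    have hval : v c' τ i - v c τ i - (c' i - c i)
        = (v (c + e) τ i - v c τ i) - e i := by
      rw [h1, hsplit]; ring
    rw [hval, abs_le]
    constructor <;> simp only [hCdef] <;> linarith
  -- discrete displacement function
  set h : (Fin n → ℝ) → Fin n → ℕ → ℝ := fun c i m => v c (m:ℝ) i - c i with hhdef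
  have hzero : ∀ c i, h c i 0 = 0 := by intro c i; simp [hhdef, hv0]
  have hbd : ∀ (a b : Fin n → ℝ) (i : Fin n) (m : ℕ), 1 ≤ m →
      |h a i m - h b i m| ≤ C := by
    intro a b i m hm
    have hτ : (0:ℝ) < m := by exact_mod_cast hm
    have hkb := keybd b a i (m:ℝ) hτ
    have heq : h a i m - h b i m = v a (m:ℝ) i - v b (m:ℝ) i - (a i - b i) := by
      simp only [hhdef]; ring
    rwa [heq]
  have hstep : ∀ (c : Fin n → ℝ) (i : Fin n) (k m : ℕ),
      h c i ((k+1)*m) = h (v c ((k*m : ℕ) : ℝ)) i m + h c i (k*m) := by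
    intro c i k m
    have hcast : (((k+1)*m : ℕ) : ℝ) = (m:ℝ) + ((k*m : ℕ) : ℝ) := by push_cast; ring
    simp only [hhdef]
    rw [hcast, tshift c (k*m) (m:ℝ)]
    push_cast
    ring
  have growth : ∀ (c b : Fin n → ℝ) (i : Fin n) (m : ℕ), 1 ≤ m → ∀ k : ℕ,
      |h c i (k*m) - k * h b i m| ≤ k * C := by
    intro c b i m hm k
    induction k with
    | zero => simp [hzero]
    | succ k ih =>
      have h1 := hstep c i k m
      have h2 := hbd (v c ((k*m:ℕ):ℝ)) b i m hm
      have hsplit : h c i ((k+1)*m) - ((k:ℝ)+1) * h b i m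
          = (h (v c ((k*m:ℕ):ℝ)) i m - h b i m) + (h c i (k*m) - (k:ℝ) * h b i m) := by
        rw [h1]; ring
      have key : |h c i ((k+1)*m) - ((k:ℝ)+1) * h b i m| ≤ ((k:ℝ)+1) * C := by
        rw [hsplit]
        calc |(h (v c ((k*m:ℕ):ℝ)) i m - h b i m) + (h c i (k*m) - (k:ℝ) * h b i m)|
            ≤ |h (v c ((k*m:ℕ):ℝ)) i m - h b i m| + |h c i (k*m) - (k:ℝ) * h b i m| :=
              abs_add_le _ _
          _ ≤ C + (k:ℝ) * C := add_le_add h2 ih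
          _ = ((k:ℝ)+1) * C := by ring
      push_cast
      exact key
  -- Fekete-type argument: definition of the rotation vector
  set S : Fin n → Set ℝ := fun i => {y | ∃ m : ℕ, 1 ≤ m ∧ y = (h 0 i m - C)/m} with hSdef
  have cross : ∀ (i : Fin n) (m k : ℕ), 1 ≤ m → 1 ≤ k →
      (h 0 i m - C)/m ≤ (h 0 i k + C)/k := by
    intro i m k hm hk
    have hmpos : (0:ℝ) < m := by exact_mod_cast hm
    have hkpos : (0:ℝ) < k := by exact_mod_cast hk
    have e1 := growth 0 0 i m hm k
    have e2 := growth 0 0 i k hk m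
    rw [mul_comm m k] at e2
    rw [abs_le] at e1 e2
    rw [div_le_div_iff₀ hmpos hkpos]
    nlinarith [e1.1, e1.2, e2.1, e2.2]
  have hSne : ∀ i, ((h 0 i 1 - C)/((1:ℕ):ℝ)) ∈ S i := fun i => ⟨1, le_refl 1, rfl⟩
  have hSbdd : ∀ i, BddAbove (S i) := by
    intro i
    refine ⟨(h 0 i 1 + C)/((1:ℕ):ℝ), ?_⟩
    rintro y ⟨m, hm, rfl⟩
    exact cross i m 1 hm (le_refl 1)
  set ξ : Fin n → ℝ := fun i => sSup (S i) with hξdef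
  have hξ_ge : ∀ (i : Fin n) (m : ℕ), 1 ≤ m → (h 0 i m - C)/m ≤ ξ i :=
    fun i m hm => le_csSup (hSbdd i) ⟨m, hm, rfl⟩
  have hξ_le : ∀ (i : Fin n) (k : ℕ), 1 ≤ k → ξ i ≤ (h 0 i k + C)/k := by
    intro i k hk
    refine csSup_le ⟨_, hSne i⟩ ?_
    rintro y ⟨m, hm, rfl⟩
    exact cross i m k hm hk
  have hξabs : ∀ (i : Fin n) (m : ℕ), 1 ≤ m → |h 0 i m - m * ξ i| ≤ C := by
    intro i m hm
    have hmpos : (0:ℝ) < m := by exact_mod_cast hm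
    have g1 := hξ_ge i m hm
    have g2 := hξ_le i m hm
    rw [div_le_iff₀ hmpos] at g1
    rw [le_div_iff₀ hmpos] at g2
    rw [abs_le]
    constructor <;> nlinarith
  have hMk : ∀ (i : Fin n) (k : ℕ), |h 0 i k| ≤ k * M i := by
    intro i k
    have hk0 : (0:ℝ) ≤ k := by positivity
    have hmvt := mvt 0 i 0 (k:ℝ) hk0
    rw [hv0] at hmvt
    simp only [Pi.zero_apply, sub_zero] at hmvt
    simp only [hhdef, Pi.zero_apply, sub_zero]
    calc |v 0 (k:ℝ) i| ≤ M i * (k:ℝ) := hmvt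
      _ = k * M i := mul_comm _ _
  have hξM : ∀ i : Fin n, |ξ i| ≤ M i := by
    intro i
    rw [abs_le]
    constructor
    · rw [neg_le]
      refine stmt9_arch_le (C := C) fun k hk => ?_
      have hkpos : (0:ℝ) < (k:ℝ) := by exact_mod_cast hk
      have g1 := hξ_ge i k hk
      have hb := (abs_le.1 (hMk i k)).1
      rw [div_le_iff₀ hkpos] at g1
      rw [show M i + C/(k:ℝ) = (M i * k + C)/k from by field_simp, le_div_iff₀ hkpos]
      linarith
    · refine stmt9_arch_le (C := C) fun k hk => ?_
      have hkpos : (0:ℝ) < (k:ℝ) := by exact_mod_cast hk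
      have g2 := hξ_le i k hk
      have hb := (abs_le.1 (hMk i k)).2
      rw [le_div_iff₀ hkpos] at g2
      rw [show M i + C/(k:ℝ) = (M i * k + C)/k from by field_simp, le_div_iff₀ hkpos]
      linarith
  -- general base point estimate
  have hgen : ∀ (c : Fin n → ℝ) (i : Fin n) (m : ℕ), 1 ≤ m →
      |h c i m - m * ξ i| ≤ C := by
    intro c i m hm
    have step : ∀ k : ℕ, 1 ≤ k → |h c i m - m * ξ i| ≤ C + 2*C/k := by
      intro k hk
      have hkpos : (0:ℝ) < (k:ℝ) := by exact_mod_cast hk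
      have hkm : 1 ≤ k*m := Nat.one_le_iff_ne_zero.2
        (Nat.mul_ne_zero (by omega) (by omega))
      have e1 := growth c c i m hm k
      have e2 := hbd c 0 i (k*m) hkm
      have e3 := hξabs i (k*m) hkm
      have hcast : ((k*m:ℕ):ℝ) = (k:ℝ)*(m:ℝ) := by push_cast; ring
      rw [hcast] at e3
      have habs : |(k:ℝ) * (h c i m - m * ξ i)| ≤ (k:ℝ)*C + 2*C := by
        have hdecomp : (k:ℝ) * (h c i m - (m:ℝ) * ξ i)
            = -(h c i (k*m) - (k:ℝ) * h c i m) + (h c i (k*m) - h 0 i (k*m))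
              + (h 0 i (k*m) - (k:ℝ)*(m:ℝ) * ξ i) := by ring
        rw [hdecomp]
        calc |-(h c i (k*m) - (k:ℝ) * h c i m) + (h c i (k*m) - h 0 i (k*m))
              + (h 0 i (k*m) - (k:ℝ)*(m:ℝ) * ξ i)|
            ≤ |-(h c i (k*m) - (k:ℝ) * h c i m)| + |h c i (k*m) - h 0 i (k*m)|
              + |h 0 i (k*m) - (k:ℝ)*(m:ℝ) * ξ i| := abs_add_three _ _ _
          _ ≤ (k:ℝ)*C + C + C := by
              rw [abs_neg]; exact add_le_add (add_le_add e1 e2) e3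
          _ = (k:ℝ)*C + 2*C := by ring
      rw [abs_mul, Nat.abs_cast] at habs
      rw [show C + 2*C/(k:ℝ) = ((k:ℝ)*C + 2*C)/(k:ℝ) from by field_simp,
        le_div_iff₀ hkpos, mul_comm]
      exact habs
    have h1 : h c i m - m * ξ i ≤ C :=
      stmt9_arch_le fun k hk => le_trans (le_abs_self _) (step k hk)
    have h2 : -(h c i m - m * ξ i) ≤ C :=
      stmt9_arch_le fun k hk => le_trans (neg_le_abs _) (step k hk)
    rw [abs_le]
    exact ⟨by linarith, h1⟩
  -- real-time estimate
  have key : ∀ (c : Fin n → ℝ) (i : Fin n) (τ : ℝ), 0 ≤ τ →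
      |v c τ i - c i - τ * ξ i| ≤ 1 + C₀ + 2 * M i := by
    intro c i τ hτ
    set m : ℕ := ⌊τ⌋₊ with hmdef
    have hms : (m:ℝ) ≤ τ := Nat.floor_le hτ
    have hlt : τ < m + 1 := Nat.lt_floor_add_one τ
    have hvs : v c τ = v (v c (m:ℝ)) (τ - m) := by
      have hh := tshift c m (τ - m)
      rwa [sub_add_cancel] at hh
    have t1 : |v (v c (m:ℝ)) (τ - m) i - v c (m:ℝ) i| ≤ M i := by
      have hmvt := mvt (v c (m:ℝ)) i 0 (τ - m) (by linarith)
      rw [hv0] at hmvt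
      calc |v (v c (m:ℝ)) (τ - m) i - v c (m:ℝ) i| ≤ M i * ((τ - m) - 0) := hmvt
        _ ≤ M i := by nlinarith [hMnn i]
    have t2 : |v c (m:ℝ) i - c i - m * ξ i| ≤ C := by
      rcases Nat.eq_zero_or_pos m with h0 | hpos
      · rw [h0]
        simp only [Nat.cast_zero, hv0, zero_mul, sub_zero, sub_self, abs_zero]
        exact le_of_lt hCpos
      · exact hgen c i m hpos
    have t3 : |((m:ℝ) - τ) * ξ i| ≤ M i := by
      rw [abs_mul]
      have hm1 : |(m:ℝ) - τ| ≤ 1 := by rw [abs_le]; constructor <;> linarith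
      calc |(m:ℝ) - τ| * |ξ i| ≤ 1 * M i :=
            mul_le_mul hm1 (hξM i) (abs_nonneg _) zero_le_one
        _ = M i := one_mul _
    have hdecomp : v c τ i - c i - τ * ξ i
        = (v (v c (m:ℝ)) (τ - m) i - v c (m:ℝ) i)
          + (v c (m:ℝ) i - c i - (m:ℝ) * ξ i) + ((m:ℝ) - τ) * ξ i := by
      rw [hvs]; ring
    rw [hdecomp]
    calc |(v (v c (m:ℝ)) (τ - m) i - v c (m:ℝ) i)
          + (v c (m:ℝ) i - c i - (m:ℝ) * ξ i) + ((m:ℝ) - τ) * ξ i|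
        ≤ |v (v c (m:ℝ)) (τ - m) i - v c (m:ℝ) i|
          + |v c (m:ℝ) i - c i - (m:ℝ) * ξ i| + |((m:ℝ) - τ) * ξ i| := abs_add_three _ _ _
      _ ≤ M i + C + M i := add_le_add (add_le_add t1 t2) t3
      _ = 1 + C₀ + 2 * M i := by rw [hCdef]; ring
  -- assemble
  have hMsup : ∀ i, M i ≤ ⨆ j, M j := fun i => le_ciSup (Set.Finite.bddAbove
    (Set.finite_range M)) i
  have hSnn : 0 ≤ ⨆ j, M j := le_trans (hMnn ⟨0, by omega⟩) (hMsup ⟨0, by omega⟩)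
  have hLnn : 0 ≤ L := by
    have h1 := hφ (fun _ => (1:ℝ)) 0
    have hnorm1 : ‖(fun _ : Fin n => (1:ℝ)) - 0‖ = 1 := by
      haveI : Nonempty (Fin n) := ⟨⟨0, by omega⟩⟩
      simp [Pi.sub_apply]
    rw [hnorm1, mul_one] at h1
    exact le_trans (abs_nonneg _) h1
  refine ⟨ξ, ?_⟩
  intro ε hε x t ht
  obtain ⟨x₀, u, hu0, hu', hut, hVe⟩ := hV ε hε x t
  set w : ℝ → Fin n → ℝ := fun τ => ε⁻¹ • u (ε * τ) with hwdef
  have hw' : ∀ τ, HasDerivAt w (f (w τ) τ) τ := by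
    intro τ
    have hinner : HasDerivAt (fun τ : ℝ => ε * τ) ε τ := by
      simpa using (hasDerivAt_id τ).const_mul ε
    have hcomp : HasDerivAt (fun τ => u (ε * τ)) (ε • f (ε⁻¹ • u (ε * τ)) ((ε*τ)/ε)) τ := by
      simpa [Function.comp_def] using HasDerivAt.scomp τ (hu' (ε * τ)) hinner
    have hsm := hcomp.const_smul ε⁻¹
    rw [smul_smul, inv_mul_cancel₀ (ne_of_gt hε), one_smul,
      mul_div_cancel_left₀ _ (ne_of_gt hε)] at hsm
    exact hsm
  have hw0 : w 0 = ε⁻¹ • x₀ := by simp only [hwdef, mul_zero, hu0]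
  have hweq : ∀ τ, w τ = v (ε⁻¹ • x₀) τ :=
    uniq w (v (ε⁻¹ • x₀)) hw' (hv _) (by rw [hw0, hv0])
  have hx : v (ε⁻¹ • x₀) (t/ε) = ε⁻¹ • x := by
    rw [← hweq]
    simp only [hwdef]
    rw [mul_div_cancel₀ _ (ne_of_gt hε), hut]
  have hcompo : ∀ i, |x₀ i - (x i - t * ξ i)| ≤ (1 + C₀ + 2 * ⨆ j, M j) * ε := by
    intro i
    have hτ0 : 0 ≤ t/ε := by positivity
    have hk := key (ε⁻¹ • x₀) i (t/ε) hτ0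
    rw [hx] at hk
    have heq : x₀ i - (x i - t * ξ i)
        = -(ε * ((ε⁻¹ • x) i - (ε⁻¹ • x₀) i - (t/ε) * ξ i)) := by
      simp only [Pi.smul_apply, smul_eq_mul]
      field_simp
      ring
    rw [heq, abs_neg, abs_mul, abs_of_pos hε]
    calc ε * |(ε⁻¹ • x) i - (ε⁻¹ • x₀) i - (t/ε) * ξ i|
        ≤ ε * (1 + C₀ + 2 * M i) := mul_le_mul_of_nonneg_left hk hε.le
      _ ≤ ε * (1 + C₀ + 2 * ⨆ j, M j) := by nlinarith [hMsup i]
      _ = (1 + C₀ + 2 * ⨆ j, M j) * ε := mul_comm _ _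
  have hnorm : ‖x₀ - (x - t • ξ)‖ ≤ (1 + C₀ + 2 * ⨆ j, M j) * ε := by
    rw [pi_norm_le_iff_of_nonneg (mul_nonneg (by nlinarith) hε.le)]
    intro i
    have hci := hcompo i
    simpa [Real.norm_eq_abs, Pi.sub_apply, Pi.smul_apply, smul_eq_mul] using hci
  rw [hVe]
  calc |φ x₀ - φ (x - t • ξ)| ≤ L * ‖x₀ - (x - t • ξ)‖ := hφ _ _
    _ ≤ L * ((1 + C₀ + 2 * ⨆ j, M j) * ε) := mul_le_mul_of_nonneg_left hnorm hLnn
    _ = L * (1 + C₀ + 2 * ⨆ j, M j) * ε := by ring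
end

section
/- Assume n = 1 and (f1), and let φ ∈ Lip(ℝ). Let V^ε be the weak solution of V^ε_t + f(x/ε, t/ε) V^ε_x = 0 with V^ε(x,0) = φ(x), given by characteristics: V^ε(x,t) = φ(x₀) where u^ε(t;x₀) = x. Then there exists ξ̄ ∈ ℝ such that for all x ∈ ℝ, t > 0 and ε > 0: |V^ε(x,t) − φ(x − ξ̄ t)| ≤ ‖Dφ‖_∞ (1 + 2‖f‖_∞) ε. If moreover f(r,τ) is independent of τ, the estimate improves to |V^ε(x,t) − φ(x − ξ̄ t)| ≤ ‖Dφ‖_∞ ε. -/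
open Filter Topology Set

/-- Homogenization of the one-dimensional linear transport equation under (f1):
with the solution given by characteristics,
`|V^ε(x,t) - φ(x - ξ̄ t)| ≤ ‖Dφ‖_∞ (1 + 2‖f‖_∞) ε`, improved to `‖Dφ‖_∞ ε`
when `f` does not depend on `τ`. -/
theorem stmt_10
    (f : ℝ → ℝ → ℝ) (κ : ℝ)
    (hcont : Continuous fun p : ℝ × ℝ => f p.1 p.2)
    (hlip : ∀ r₁ τ₁ r₂ τ₂, |f r₁ τ₁ - f r₂ τ₂| ≤ κ * (|r₁ - r₂| + |τ₁ - τ₂|))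
    (hper : ∀ (r τ : ℝ) (l k : ℤ), f (r + l) (τ + k) = f r τ)
    (M : ℝ) (hM : ∀ r τ, |f r τ| ≤ M)
    (φ : ℝ → ℝ) (L : ℝ)
    (hφ : ∀ x y, |φ x - φ y| ≤ L * |x - y|)
    (V : ℝ → ℝ → ℝ → ℝ)
    (hV : ∀ ε > (0 : ℝ), ∀ x t : ℝ,
      ∃ (x₀ : ℝ) (u : ℝ → ℝ),
        u 0 = x₀ ∧ (∀ s, HasDerivAt u (f (u s / ε) (s / ε)) s) ∧
        u t = x ∧ V ε x t = φ x₀) :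
    ∃ ξbar : ℝ,
      (∀ ε > (0 : ℝ), ∀ x : ℝ, ∀ t > (0 : ℝ),
        |V ε x t - φ (x - ξbar * t)| ≤ L * (1 + 2 * M) * ε) ∧
      ((∀ r τ₁ τ₂, f r τ₁ = f r τ₂) →
        ∀ ε > (0 : ℝ), ∀ x : ℝ, ∀ t > (0 : ℝ),
          |V ε x t - φ (x - ξbar * t)| ≤ L * ε) := by
  -- basic positivity facts
  have hκ : 0 ≤ κ := by
    have h := hlip 0 0 1 0
    norm_num at h
    linarith [abs_nonneg (f 0 0 - f 1 0)]
  have hM0 : 0 ≤ M := le_trans (abs_nonneg _) (hM 0 0)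
  have hL0 : 0 ≤ L := by
    have h := hφ 0 1
    norm_num at h
    linarith [abs_nonneg (φ 0 - φ 1)]
  -- Lipschitz vector field
  have hvlip : ∀ t : ℝ, LipschitzWith ⟨κ, hκ⟩ (fun x => f x t) := by
    intro t
    refine LipschitzWith.of_dist_le_mul fun x y => ?_
    have h := hlip x t y t
    simp only [Real.dist_eq, NNReal.coe_mk]
    exact (by simpa using h : |f x t - f y t| ≤ κ * |x - y|)
  -- forward uniqueness
  have uniq : ∀ (w₁ w₂ : ℝ → ℝ), (∀ s, HasDerivAt w₁ (f (w₁ s) s) s) →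
      (∀ s, HasDerivAt w₂ (f (w₂ s) s) s) → ∀ a b : ℝ, a ≤ b → w₁ a = w₂ a → w₁ b = w₂ b := by
    intro w₁ w₂ h1 h2 a b hab heq
    have := ODE_solution_unique (v := fun t x => f x t) (K := ⟨κ, hκ⟩) (a := a) (b := b)
      hvlip
      (fun s _ => ((h1 s).continuousAt).continuousWithinAt)
      (fun s _ => (h1 s).hasDerivWithinAt)
      (fun s _ => ((h2 s).continuousAt).continuousWithinAt)
      (fun s _ => (h2 s).hasDerivWithinAt)
      heq
    exact this (right_mem_Icc.2 hab)
  -- existence of solutions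
  have exSol : ∀ a : ℝ, ∃ w : ℝ → ℝ, (∀ s, HasDerivAt w (f (w s) s) s) ∧ w 0 = a := by
    intro a
    obtain ⟨x₀, u, hu0, hud, hut, -⟩ := hV 1 one_pos a 0
    exact ⟨u, fun s => by simpa using hud s, hut⟩
  choose sol hsolD hsol0 using exSol
  have hcontSol : ∀ a, Continuous (sol a) :=
    fun a => continuous_iff_continuousAt.2 fun s => (hsolD a s).continuousAt
  -- speed bound
  have solLip : ∀ (w : ℝ → ℝ), (∀ s, HasDerivAt w (f (w s) s) s) →
      ∀ s t : ℝ, s ≤ t → |w t - w s| ≤ M * (t - s) := by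
    intro w hw s t hst
    have h := norm_image_sub_le_of_norm_deriv_le_segment' (a := s) (b := t)
      (f := w) (f' := fun r => f (w r) r) (C := M)
      (fun r _ => (hw r).hasDerivWithinAt)
      (fun r _ => by simpa [Real.norm_eq_abs] using hM (w r) r)
      t (right_mem_Icc.2 hst)
    simpa [Real.norm_eq_abs] using h
  -- integer space translation
  have solAddInt : ∀ (k : ℤ) (a : ℝ), ∀ c, 0 ≤ c → sol (a + k) c = sol a c + k := by
    intro k a c hc
    have hw : ∀ s, HasDerivAt (fun s => sol a s + (k : ℝ)) (f (sol a s + k) s) s := by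
      intro s
      have hk : f (sol a s + k) s = f (sol a s) s := by
        have h := hper (sol a s) s k 0
        simpa using h
      rw [hk]
      exact (hsolD a s).add_const _
    exact uniq _ _ (hsolD (a + k)) hw 0 c hc (by simp [hsol0])
  -- monotonicity in the initial condition
  have solMono : ∀ c : ℝ, 0 ≤ c → ∀ a b : ℝ, a ≤ b → sol a c ≤ sol b c := by
    intro c hc a b hab
    by_contra hlt
    push_neg at hlt
    obtain ⟨s, hsmem, hseq⟩ : ∃ s ∈ Icc (0:ℝ) c, sol a s - sol b s = 0 := by
      have hcont2 : ContinuousOn (fun s => sol a s - sol b s) (Icc 0 c) :=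
        ((hcontSol a).sub (hcontSol b)).continuousOn
      have h0 : (0:ℝ) ∈ Icc (sol a 0 - sol b 0) (sol a c - sol b c) := by
        constructor
        · simp [hsol0]; linarith
        · linarith
      obtain ⟨s, hsmem, hseq⟩ := intermediate_value_Icc hc hcont2 h0
      exact ⟨s, hsmem, hseq⟩
    have := uniq _ _ (hsolD a) (hsolD b) s c hsmem.2 (by linarith)
    linarith
  -- integer time shift
  have solShiftInt : ∀ (m : ℕ) (a : ℝ) (c : ℝ), 0 ≤ c → sol a (c + m) = sol (sol a m) c := by
    intro m a c hc
    have hw : ∀ s, HasDerivAt (fun s => sol a (s + m)) (f (sol a (s + m)) s) s := by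
      intro s
      have hd : HasDerivAt (fun s : ℝ => sol a (s + m)) (f (sol a (s + m)) (s + m)) s := by
        simpa [Function.comp_def] using HasDerivAt.comp s (hsolD a (s + m)) ((hasDerivAt_id s).add_const (m:ℝ))
      have hk : f (sol a (s + m)) (s + m) = f (sol a (s + m)) s := by
        have h := hper (sol a (s + m)) s 0 m
        simpa using h
      rwa [hk] at hd
    exact uniq _ _ hw (hsolD (sol a (m:ℝ))) 0 c hc (by simp [hsol0])
  -- the Poincaré map
  have hPm : Monotone (fun a => sol a 1) := fun a b hab => solMono 1 zero_le_one a b hab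
  have hP1 : ∀ a : ℝ, (fun a => sol a 1) (a + 1) = (fun a => sol a 1) a + 1 := by
    intro a
    simpa using solAddInt 1 a 1 zero_le_one
  set P : CircleDeg1Lift := ⟨⟨fun a => sol a 1, hPm⟩, hP1⟩ with hPdef
  have hPapp : ∀ a : ℝ, P a = sol a 1 := fun a => rfl
  -- circle map bound
  have circBound : ∀ (F : CircleDeg1Lift) (x : ℝ), |F x - (x + F.translationNumber)| ≤ 1 := by
    intro F x
    rw [abs_le]
    constructor
    · have h1 : ((⌈F.translationNumber⌉ - 1 : ℤ) : ℝ) < F.translationNumber := by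
        push_cast
        linarith [Int.ceil_lt_add_one F.translationNumber]
      have h2 := F.lt_map_of_int_lt_translationNumber h1 x
      have h3 : F.translationNumber - 1 ≤ ((⌈F.translationNumber⌉ - 1 : ℤ) : ℝ) := by
        push_cast
        linarith [Int.le_ceil F.translationNumber]
      linarith
    · linarith [F.map_lt_add_translationNumber_add_one x]
  -- sol at natural times is the iterate of P
  have solNat : ∀ (a : ℝ) (n : ℕ), sol a n = (P ^ n) a := by
    intro a n
    induction n with
    | zero => simp [hsol0]
    | succ n ih =>
        have h1 : sol a (1 + (n:ℝ)) = sol (sol a n) 1 := solShiftInt n a 1 zero_le_one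
        rw [pow_succ', CircleDeg1Lift.mul_apply, ← ih, hPapp, ← h1]
        congr 1
        push_cast
        ring
  -- |ξbar| ≤ M
  have hξM : |P.translationNumber| ≤ M := by
    rw [abs_le]
    constructor
    · refine P.le_translationNumber_of_add_le fun x => ?_
      have h := solLip (sol x) (hsolD x) 0 1 zero_le_one
      rw [hsol0, abs_le] at h
      rw [hPapp]
      norm_num at h
      linarith [h.1]
    · refine P.translationNumber_le_of_le_add fun x => ?_
      have h := solLip (sol x) (hsolD x) 0 1 zero_le_one
      rw [hsol0, abs_le] at h
      rw [hPapp]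
      norm_num at h
      linarith [h.2]
  have solLipAbs : ∀ (a s t : ℝ), |sol a t - sol a s| ≤ M * |t - s| := by
    intro a s t
    rcases le_total s t with h | h
    · rw [abs_of_nonneg (by linarith : (0:ℝ) ≤ t - s)]
      exact solLip (sol a) (hsolD a) s t h
    · rw [abs_sub_comm, abs_of_nonpos (by linarith : t - s ≤ 0), neg_sub]
      exact solLip (sol a) (hsolD a) t s h
  -- general bound for arbitrary solutions
  have key : ∀ (w : ℝ → ℝ), (∀ s, HasDerivAt w (f (w s) s) s) → ∀ T : ℝ, 0 ≤ T →
      |w T - w 0 - P.translationNumber * T| ≤ 1 + 2 * M := by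
    intro w hw T hT
    set a := w 0 with ha
    have hwT : w T = sol a T := uniq _ _ hw (hsolD a) 0 T hT (by simp [hsol0, ha])
    set n := ⌊T⌋₊ with hn
    have hnT : (n : ℝ) ≤ T := Nat.floor_le hT
    have hTn : T < n + 1 := Nat.lt_floor_add_one T
    have h1 : |sol a T - sol a n| ≤ M * (T - n) := solLip (sol a) (hsolD a) n T hnT
    have h1' : M * (T - n) ≤ M := by nlinarith
    have h2 : |sol a (n:ℝ) - (a + (n:ℝ) * P.translationNumber)| ≤ 1 := by
      have hc := circBound (P ^ n) a
      rw [CircleDeg1Lift.translationNumber_pow] at hc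
      rwa [solNat a n]
    have h3 : |P.translationNumber * (T - n)| ≤ M := by
      rw [abs_mul]
      have habs : |T - (n:ℝ)| ≤ 1 := by
        rw [abs_of_nonneg (by linarith)]
        linarith
      calc |P.translationNumber| * |T - (n:ℝ)| ≤ M * 1 :=
            mul_le_mul hξM habs (abs_nonneg _) hM0
        _ = M := mul_one M
    have hsplit : w T - w 0 - P.translationNumber * T =
        (sol a T - sol a n) + (sol a (n:ℝ) - (a + (n:ℝ) * P.translationNumber))
          + (-(P.translationNumber * (T - n))) := by
      rw [hwT, ← ha]
      ring
    rw [hsplit]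
    calc |(sol a T - sol a n) + (sol a (n:ℝ) - (a + (n:ℝ) * P.translationNumber))
          + (-(P.translationNumber * (T - n)))|
        ≤ |(sol a T - sol a n) + (sol a (n:ℝ) - (a + (n:ℝ) * P.translationNumber))|
          + |(-(P.translationNumber * (T - n)))| := abs_add_le _ _
      _ ≤ |sol a T - sol a n| + |sol a (n:ℝ) - (a + (n:ℝ) * P.translationNumber)|
          + |(-(P.translationNumber * (T - n)))| := by
            have := abs_add_le (sol a T - sol a n)
              (sol a (n:ℝ) - (a + (n:ℝ) * P.translationNumber))
            linarith
      _ ≤ 1 + 2 * M := by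
            rw [abs_neg]
            linarith
  -- assembly
  have assemble : ∀ C : ℝ,
      (∀ (w : ℝ → ℝ), (∀ s, HasDerivAt w (f (w s) s) s) → ∀ T : ℝ, 0 ≤ T →
        |w T - w 0 - P.translationNumber * T| ≤ C) →
      ∀ ε, 0 < ε → ∀ x t : ℝ, 0 < t →
        |V ε x t - φ (x - P.translationNumber * t)| ≤ L * C * ε := by
    intro C hkey ε hε x t ht
    obtain ⟨x₀, u, hu0, hud, hut, hVeq⟩ := hV ε hε x t
    have hεne : ε ≠ 0 := ne_of_gt hε
    have hwD : ∀ s, HasDerivAt (fun s => u (ε * s) / ε) (f (u (ε * s) / ε) s) s := by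
      intro s
      have hinner : HasDerivAt (fun y : ℝ => ε * y) ε s := by
        simpa using (hasDerivAt_id s).const_mul ε
      have h1 := ((hud (ε * s)).comp s hinner).div_const ε
      simp only [Function.comp_def] at h1
      have hx2 : f (u (ε * s) / ε) ((ε * s) / ε) * ε / ε = f (u (ε * s) / ε) s := by
        rw [mul_div_cancel_right₀ _ hεne, mul_div_cancel_left₀ _ hεne]
      rwa [hx2] at h1
    have h2 := hkey _ hwD (t / ε) (by positivity)
    have he1 : ε * (t / ε) = t := by field_simp
    rw [he1, hut] at h2
    rw [mul_zero, hu0] at h2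
    -- h2 : |x / ε - x₀ / ε - τ * (t/ε)| ≤ C
    have h3 : |x - x₀ - P.translationNumber * t| ≤ C * ε := by
      have heq : x - x₀ - P.translationNumber * t =
          ε * (x / ε - x₀ / ε - P.translationNumber * (t / ε)) := by
        field_simp
      rw [heq, abs_mul, abs_of_pos hε]
      have := mul_le_mul_of_nonneg_left h2 hε.le
      linarith
    rw [hVeq]
    have h4 := hφ x₀ (x - P.translationNumber * t)
    have h5 : |x₀ - (x - P.translationNumber * t)| = |x - x₀ - P.translationNumber * t| := by
      rw [show x₀ - (x - P.translationNumber * t) = -(x - x₀ - P.translationNumber * t) by ring,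
        abs_neg]
    rw [h5] at h4
    calc |φ x₀ - φ (x - P.translationNumber * t)| ≤ L * |x - x₀ - P.translationNumber * t| := h4
      _ ≤ L * (C * ε) := mul_le_mul_of_nonneg_left h3 hL0
      _ = L * C * ε := by ring
  refine ⟨P.translationNumber, ?_, ?_⟩
  · intro ε hε x t ht
    exact assemble (1 + 2 * M) key ε hε x t ht
  · intro hauto
    -- real time shift (autonomous case)
    have solShiftR : ∀ (c d : ℝ), 0 ≤ d → ∀ a, sol a (d + c) = sol (sol a c) d := by
      intro c d hd a
      have hw : ∀ s, HasDerivAt (fun s => sol a (s + c)) (f (sol a (s + c)) s) s := by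
        intro s
        have hd1 : HasDerivAt (fun s : ℝ => sol a (s + c)) (f (sol a (s + c)) (s + c)) s := by
          simpa [Function.comp_def] using HasDerivAt.comp s (hsolD a (s + c)) ((hasDerivAt_id s).add_const c)
        rwa [hauto (sol a (s + c)) (s + c) s] at hd1
      exact uniq _ _ hw (hsolD (sol a c)) 0 d hd (by simp [hsol0])
    -- family of flow maps
    obtain ⟨Φ, hΦapp⟩ : ∃ Φ : {c : ℝ // 0 ≤ c} → CircleDeg1Lift,
        ∀ c (a : ℝ), Φ c a = sol a c.1 :=
      ⟨fun c => ⟨⟨fun a => sol a c.1, fun a b hab => solMono c.1 c.2 a b hab⟩,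
        fun a => by simpa using solAddInt 1 a c.1 c.2⟩, fun c a => rfl⟩
    have hΦadd : ∀ (c d : ℝ) (hc : 0 ≤ c) (hd : 0 ≤ d),
        Φ ⟨c + d, add_nonneg hc hd⟩ = Φ ⟨c, hc⟩ * Φ ⟨d, hd⟩ := by
      intro c d hc hd
      apply CircleDeg1Lift.ext
      intro a
      rw [CircleDeg1Lift.mul_apply, hΦapp, hΦapp, hΦapp]
      exact solShiftR d c hc a
    have hcomm : ∀ (c d : ℝ) (hc : 0 ≤ c) (hd : 0 ≤ d),
        Commute (Φ ⟨c, hc⟩) (Φ ⟨d, hd⟩) := by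
      intro c d hc hd
      show Φ ⟨c, hc⟩ * Φ ⟨d, hd⟩ = Φ ⟨d, hd⟩ * Φ ⟨c, hc⟩
      rw [← hΦadd c d hc hd, ← hΦadd d c hd hc]
      exact congrArg Φ (Subtype.ext (add_comm c d))
    -- the translation-number function
    obtain ⟨g, hg1, hgadd, hg1P, hg0⟩ :
        ∃ g : ℝ → ℝ,
          (∀ c, 0 ≤ c → ∀ a, |sol a c - (a + g c)| ≤ 1) ∧
          (∀ c d, 0 ≤ c → 0 ≤ d → g (c + d) = g c + g d) ∧
          g 1 = P.translationNumber ∧ g 0 = 0 := by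
      refine ⟨fun c => if hc : 0 ≤ c then (Φ ⟨c, hc⟩).translationNumber else 0,
        ?_, ?_, ?_, ?_⟩
      · intro c hc a
        beta_reduce
        rw [dif_pos hc, ← hΦapp ⟨c, hc⟩ a]
        exact circBound _ a
      · intro c d hc hd
        beta_reduce
        rw [dif_pos (add_nonneg hc hd), dif_pos hc, dif_pos hd, hΦadd c d hc hd,
          CircleDeg1Lift.translationNumber_mul_of_commute (hcomm c d hc hd)]
      · beta_reduce
        rw [dif_pos zero_le_one]
        refine congrArg CircleDeg1Lift.translationNumber (CircleDeg1Lift.ext fun a => ?_)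
        rw [hΦapp, hPapp]
      · beta_reduce
        rw [dif_pos le_rfl]
        have h1 : Φ ⟨0, le_rfl⟩ = 1 := by
          refine CircleDeg1Lift.ext fun a => ?_
          rw [hΦapp]
          simp [hsol0]
        rw [h1, CircleDeg1Lift.translationNumber_one]
    -- natural multiples
    have hg_nat : ∀ (n : ℕ) (c : ℝ), 0 ≤ c → g ((n:ℝ) * c) = (n:ℝ) * g c := by
      intro n c hc
      induction n with
      | zero => simpa using hg0
      | succ n ih =>
          push_cast
          rw [show ((n:ℝ) + 1) * c = (n:ℝ) * c + c by ring,
            hgadd ((n:ℝ) * c) c (by positivity) hc, ih]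
          ring
    -- Lipschitz bound for g
    have hgLip : ∀ c d : ℝ, 0 ≤ c → 0 ≤ d → |g c - g d| ≤ M * |c - d| := by
      intro c d hc hd
      have hstep : ∀ n : ℕ, (n:ℝ) * |g c - g d| ≤ 2 + (n:ℝ) * (M * |c - d|) := by
        intro n
        have hnc : (0:ℝ) ≤ (n:ℝ) * c := by positivity
        have hnd : (0:ℝ) ≤ (n:ℝ) * d := by positivity
        have e1 := hg1 ((n:ℝ) * c) hnc 0
        have e2 := hg1 ((n:ℝ) * d) hnd 0
        have e3 := solLipAbs 0 ((n:ℝ) * d) ((n:ℝ) * c)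
        rw [hg_nat n c hc] at e1
        rw [hg_nat n d hd] at e2
        have k1 : (n:ℝ) * |g c - g d| = |(n:ℝ) * g c - (n:ℝ) * g d| := by
          rw [show (n:ℝ) * g c - (n:ℝ) * g d = (n:ℝ) * (g c - g d) by ring, abs_mul,
            abs_of_nonneg (by positivity : (0:ℝ) ≤ (n:ℝ))]
        have k2 : M * |(n:ℝ) * c - (n:ℝ) * d| = (n:ℝ) * (M * |c - d|) := by
          rw [show (n:ℝ) * c - (n:ℝ) * d = (n:ℝ) * (c - d) by ring, abs_mul,
            abs_of_nonneg (by positivity : (0:ℝ) ≤ (n:ℝ))]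
          ring
        rw [k1, ← k2]
        rw [abs_le] at e1 e2 e3 ⊢
        constructor
        · linarith [e1.1, e1.2, e2.1, e2.2, e3.1, e3.2]
        · linarith [e1.1, e1.2, e2.1, e2.2, e3.1, e3.2]
      by_contra hlt
      push_neg at hlt
      have hΔ : 0 < |g c - g d| - M * |c - d| := by linarith
      obtain ⟨n, hn⟩ := exists_nat_gt (2 / (|g c - g d| - M * |c - d|))
      have h4 : 2 < (n:ℝ) * (|g c - g d| - M * |c - d|) := by
        have h2 : 2 / (|g c - g d| - M * |c - d|) * (|g c - g d| - M * |c - d|) = 2 :=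
          div_mul_cancel₀ 2 (ne_of_gt hΔ)
        calc (2:ℝ) = 2 / (|g c - g d| - M * |c - d|) * (|g c - g d| - M * |c - d|) := h2.symm
          _ < (n:ℝ) * (|g c - g d| - M * |c - d|) := by
              exact mul_lt_mul_of_pos_right hn hΔ
      have h3 := hstep n
      nlinarith
    -- dyadic-style values: g(k/n)
    have hg_inv : ∀ n : ℕ, 0 < n → g ((n:ℝ)⁻¹) = P.translationNumber / n := by
      intro n hn
      have hn0 : (0:ℝ) < n := by exact_mod_cast hn
      have h1 := hg_nat n ((n:ℝ)⁻¹) (by positivity)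
      rw [mul_inv_cancel₀ (ne_of_gt hn0), hg1P] at h1
      rw [h1]
      field_simp
    have hg_frac : ∀ (k n : ℕ), 0 < n → g ((k:ℝ) / n) = (k:ℝ) / n * P.translationNumber := by
      intro k n hn
      have hn0 : (0:ℝ) < n := by exact_mod_cast hn
      have h1 := hg_nat k ((n:ℝ)⁻¹) (by positivity)
      rw [hg_inv n hn] at h1
      rw [div_eq_mul_inv, h1]
      field_simp
    -- linearity of g
    have hg_lin : ∀ T : ℝ, 0 < T → g T = T * P.translationNumber := by
      intro T hT
      have hsmall : ∀ δ : ℝ, 0 < δ → |g T - T * P.translationNumber| ≤ (M + M) * δ := by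
        intro δ hδ
        obtain ⟨n, hn⟩ := exists_nat_gt (1 / δ)
        have hn0 : (0:ℝ) < n := lt_trans (by positivity) hn
        set k := ⌊(n:ℝ) * T⌋₊ with hk
        have hk1 : (k:ℝ) ≤ (n:ℝ) * T := Nat.floor_le (by positivity)
        have hk2 : (n:ℝ) * T < (k:ℝ) + 1 := Nat.lt_floor_add_one _
        have hq0 : (0:ℝ) ≤ (k:ℝ) / n := by positivity
        have h1n : 1 / (n:ℝ) < δ := by
          rw [div_lt_iff₀ hn0]
          calc (1:ℝ) = δ * (1 / δ) := by field_simp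
            _ < δ * n := mul_lt_mul_of_pos_left hn hδ
        have hqT : |T - (k:ℝ) / n| ≤ δ := by
          have hle : (k:ℝ) / n ≤ T := by
            rw [div_le_iff₀ hn0]
            nlinarith
          have hlt : T - (k:ℝ) / n < 1 / n := by
            have hx : T < ((k:ℝ) + 1) / n := by
              rw [lt_div_iff₀ hn0]
              nlinarith
            have h2 : ((k:ℝ) + 1) / n = (k:ℝ) / n + 1 / n := by ring
            linarith
          rw [abs_of_nonneg (by linarith)]
          linarith
        have hgq : g ((k:ℝ) / n) = (k:ℝ) / n * P.translationNumber :=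
          hg_frac k n (Nat.cast_pos.mp hn0)
        have hLip := hgLip T ((k:ℝ) / n) hT.le hq0
        have hτ : |g ((k:ℝ) / n) - T * P.translationNumber| ≤ M * δ := by
          rw [hgq, show (k:ℝ) / n * P.translationNumber - T * P.translationNumber
            = -((T - (k:ℝ) / n) * P.translationNumber) by ring, abs_neg, abs_mul]
          calc |T - (k:ℝ) / n| * |P.translationNumber| ≤ δ * M :=
              mul_le_mul hqT hξM (abs_nonneg _) hδ.le
            _ = M * δ := mul_comm _ _
        have htri := abs_sub_le (g T) (g ((k:ℝ) / n)) (T * P.translationNumber)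
        have hM1 : M * |T - (k:ℝ) / n| ≤ M * δ := mul_le_mul_of_nonneg_left hqT hM0
        nlinarith
      have hsmall' : ∀ δ : ℝ, 0 < δ → |g T - T * P.translationNumber| ≤ δ := by
        intro δ hδ
        have h1 := hsmall (δ / (M + M + 1)) (by positivity)
        have h2 : (M + M) * (δ / (M + M + 1)) ≤ δ := by
          rw [show (M + M) * (δ / (M + M + 1)) = (M + M) / (M + M + 1) * δ by ring]
          have hr : (M + M) / (M + M + 1) ≤ 1 := by
            rw [div_le_one (by linarith)]
            linarith
          nlinarith
        linarith
      have h0 : |g T - T * P.translationNumber| ≤ 0 := by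
        by_contra h
        push_neg at h
        have := hsmall' (|g T - T * P.translationNumber| / 2) (by positivity)
        linarith
      have hnn := abs_nonneg (g T - T * P.translationNumber)
      have heq0 : g T - T * P.translationNumber = 0 := by
        rw [← abs_eq_zero]
        linarith
      linarith
    -- improved key bound
    have key1 : ∀ (w : ℝ → ℝ), (∀ s, HasDerivAt w (f (w s) s) s) → ∀ T : ℝ, 0 ≤ T →
        |w T - w 0 - P.translationNumber * T| ≤ 1 := by
      intro w hw T hT
      have hwT : w T = sol (w 0) T := uniq _ _ hw (hsolD (w 0)) 0 T hT (by simp [hsol0])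
      rcases eq_or_lt_of_le hT with h | h
      · rw [← h]
        simp
      · have h1 := hg1 T hT (w 0)
        rw [hg_lin T h] at h1
        rw [show w T - w 0 - P.translationNumber * T
          = sol (w 0) T - (w 0 + T * P.translationNumber) by rw [hwT]; ring]
        exact h1
    intro ε hε x t ht
    have := assemble 1 key1 ε hε x t ht
    simpa using this
end

section
/- Assume (f1). Then for all σ, l, t > 0 and all c ∈ ℝ, the solutions of the rescaled ODE satisfy the approximate subadditivity inequality v((σ+l)t; (σ+l)c) ≤ v(σt; σc) + v(lt; lc) + 2(‖f‖_∞ + 1). -/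
open Filter Topology

/-- Approximate subadditivity of `(τ,c) ↦ v(τ;c)` under (f1):
`v((σ+l)t; (σ+l)c) ≤ v(σt; σc) + v(lt; lc) + 2(‖f‖_∞ + 1)`. -/
theorem stmt_12
    (f : ℝ → ℝ → ℝ) (κ : ℝ)
    (hcont : Continuous fun p : ℝ × ℝ => f p.1 p.2)
    (hlip : ∀ r₁ τ₁ r₂ τ₂, |f r₁ τ₁ - f r₂ τ₂| ≤ κ * (|r₁ - r₂| + |τ₁ - τ₂|))
    (hper : ∀ (r τ : ℝ) (l k : ℤ), f (r + l) (τ + k) = f r τ)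
    (M : ℝ) (hM : ∀ r τ, |f r τ| ≤ M)
    (v : ℝ → ℝ → ℝ)
    (hv0 : ∀ c, v c 0 = c)
    (hv : ∀ c τ, HasDerivAt (v c) (f (v c τ) τ) τ) :
    ∀ σ > (0 : ℝ), ∀ l > (0 : ℝ), ∀ t > (0 : ℝ), ∀ c : ℝ,
      v ((σ + l) * c) ((σ + l) * t) ≤
        v (σ * c) (σ * t) + v (l * c) (l * t) + 2 * (M + 1) := by
  have hM0 : 0 ≤ M := le_trans (abs_nonneg _) (hM 0 0)
  -- Lipschitz in the space variable, uniformly in time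
  have hK : ∀ τ : ℝ, LipschitzWith κ.toNNReal (fun x => f x τ) := by
    intro τ
    apply LipschitzWith.of_dist_le_mul
    intro x y
    rw [Real.dist_eq, Real.dist_eq, Real.coe_toNNReal']
    calc |f x τ - f y τ| ≤ κ * (|x - y| + |τ - τ|) := hlip x τ y τ
      _ = κ * |x - y| := by simp
      _ ≤ max κ 0 * |x - y| :=
          mul_le_mul_of_nonneg_right (le_max_left _ _) (abs_nonneg _)
  -- global uniqueness of solutions
  have uniq : ∀ (g₁ g₂ : ℝ → ℝ), (∀ τ, HasDerivAt g₁ (f (g₁ τ) τ) τ) →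
      (∀ τ, HasDerivAt g₂ (f (g₂ τ) τ) τ) → ∀ s : ℝ, g₁ s = g₂ s → ∀ τ, g₁ τ = g₂ τ := by
    intro g₁ g₂ h₁ h₂ s hs τ
    have hmem : s ∈ Set.Ioo (min s τ - 1) (max s τ + 1) := by
      constructor
      · have := min_le_left s τ; linarith
      · have := le_max_left s τ; linarith
    have hτ : τ ∈ Set.Icc (min s τ - 1) (max s τ + 1) := by
      constructor
      · have := min_le_right s τ; linarith
      · have := le_max_right s τ; linarith
    refine ODE_solution_unique_of_mem_Icc
      (v := fun t x => f x t) (s := fun _ => Set.univ)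
      (fun t _ => (hK t).lipschitzOnWith) hmem
      ?_ (fun t _ => h₁ t) (fun _ _ => trivial)
      ?_ (fun t _ => h₂ t) (fun _ _ => trivial) hs hτ
    · exact (continuousOn_of_forall_continuousAt fun t _ => (h₁ t).continuousAt)
    · exact (continuousOn_of_forall_continuousAt fun t _ => (h₂ t).continuousAt)
  -- integer shift in the space variable
  have shift : ∀ (c : ℝ) (m : ℤ) (τ : ℝ), v (c + m) τ = v c τ + m := by
    intro c m τ
    refine uniq (v (c + m)) (fun τ => v c τ + m) (hv _) ?_ 0 (by simp [hv0]) τ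
    intro τ
    have : f (v c τ + (m : ℝ)) τ = f (v c τ) τ := by
      have := hper (v c τ) τ m 0
      simpa using this
    show HasDerivAt (fun τ => v c τ + (m : ℝ)) (f (v c τ + (m : ℝ)) τ) τ
    rw [this]
    exact (hv c τ).add_const _
  -- integer time shift / flow property
  have flow : ∀ (c : ℝ) (k : ℤ) (τ : ℝ), v c (τ + k) = v (v c k) τ := by
    intro c k τ
    refine uniq (fun τ => v c (τ + k)) (v (v c (k : ℝ))) ?_ (hv _) 0 (by simp [hv0]) τ
    intro τ
    have hder : HasDerivAt (fun τ : ℝ => v c (τ + k)) (f (v c (τ + k)) (τ + k)) τ := by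
      have := (hv c (τ + k)).comp τ ((hasDerivAt_id τ).add_const (k : ℝ))
      simpa [Function.comp_def] using this
    have : f (v c (τ + k)) (τ + (k : ℝ)) = f (v c (τ + k)) τ := by
      have := hper (v c (τ + k)) τ 0 k
      simpa using this
    rwa [this] at hder
  have hcontv : ∀ c : ℝ, Continuous (v c) := fun c =>
    continuous_iff_continuousAt.mpr fun τ => (hv c τ).continuousAt
  -- comparison / monotonicity in the initial value
  have mono : ∀ (c₁ c₂ : ℝ), c₁ ≤ c₂ → ∀ τ, v c₁ τ ≤ v c₂ τ := by
    intro c₁ c₂ hc τ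
    by_contra hlt
    push_neg at hlt
    set g : ℝ → ℝ := fun s => v c₁ s - v c₂ s with hgdef
    have hgc : Continuous g := (hcontv c₁).sub (hcontv c₂)
    have hg0 : g 0 ≤ 0 := by simp [hgdef, hv0]; linarith
    have hgτ : 0 < g τ := by simp [hgdef]; linarith
    have hex : ∃ s, g s = 0 := by
      rcases le_total 0 τ with h | h
      · have : (0 : ℝ) ∈ Set.Icc (g 0) (g τ) := ⟨hg0, le_of_lt hgτ⟩
        obtain ⟨s, _, hs⟩ := intermediate_value_Icc h hgc.continuousOn this
        exact ⟨s, hs⟩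
      · have : (0 : ℝ) ∈ Set.Icc (g 0) (g τ) := ⟨hg0, le_of_lt hgτ⟩
        obtain ⟨s, _, hs⟩ := intermediate_value_Icc' h hgc.continuousOn this
        exact ⟨s, hs⟩
    obtain ⟨s, hs⟩ := hex
    have heq : v c₁ s = v c₂ s := by
      have : v c₁ s - v c₂ s = 0 := hs
      linarith
    have := uniq (v c₁) (v c₂) (hv c₁) (hv c₂) s heq τ
    linarith
  -- Lipschitz bound in time
  have timeLip : ∀ (c a b : ℝ), |v c a - v c b| ≤ M * |a - b| := by
    intro c a b
    have := Convex.norm_image_sub_le_of_norm_hasDerivWithin_le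
      (f := v c) (C := M) (s := Set.univ)
      (fun τ _ => (hv c τ).hasDerivWithinAt)
      (fun τ _ => by rw [Real.norm_eq_abs]; exact hM _ _)
      convex_univ (Set.mem_univ b) (Set.mem_univ a)
    simpa [Real.norm_eq_abs] using this
  -- main argument
  intro σ hσ l hl t ht c
  set k : ℤ := ⌈σ * t⌉ with hk
  set δ : ℝ := (k : ℝ) - σ * t with hδdef
  have hδ0 : 0 ≤ δ := by
    have := Int.le_ceil (σ * t); simp [hδdef, hk]; linarith
  have hδ1 : δ ≤ 1 := by
    have := Int.ceil_lt_add_one (σ * t); simp [hδdef, hk]; linarith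
  set A : ℝ := v ((σ + l) * c) (k : ℝ) with hA
  have step1 : v ((σ + l) * c) ((σ + l) * t) = v A (l * t - δ) := by
    have := flow ((σ + l) * c) k (l * t - δ)
    rw [← this]
    congr 1
    simp [hδdef]; ring
  set B : ℝ := v (σ * c) (σ * t) with hB
  set m1 : ℤ := ⌈l * c⌉ with hm1
  have hA1 : A ≤ v ((σ + l) * c) (σ * t) + M * δ := by
    have h1 := timeLip ((σ + l) * c) (k : ℝ) (σ * t)
    have h2 : |(k : ℝ) - σ * t| = δ := by rw [← hδdef]; exact abs_of_nonneg hδ0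
    rw [h2] at h1
    have := abs_le.mp h1
    rw [hA]
    linarith [this.2]
  have hA2 : v ((σ + l) * c) (σ * t) ≤ B + m1 := by
    have h1 : (σ + l) * c ≤ σ * c + (m1 : ℝ) := by
      have := Int.le_ceil (l * c)
      rw [hm1]; nlinarith [Int.le_ceil (l * c)]
    calc v ((σ + l) * c) (σ * t) ≤ v (σ * c + m1) (σ * t) := mono _ _ h1 _
      _ = B + m1 := by rw [shift, hB]
  have hm1le : (m1 : ℝ) ≤ l * c + 1 := le_of_lt (Int.ceil_lt_add_one _)
  have hAB : A ≤ B + l * c + 1 + M := by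
    have : M * δ ≤ M := by nlinarith
    linarith
  set n : ℤ := ⌈B + 1 + M⌉ with hn
  have hAn : A ≤ l * c + n := by
    have := Int.le_ceil (B + 1 + M)
    rw [hn]; linarith
  have hnle : (n : ℝ) ≤ B + M + 2 := by
    have := Int.ceil_lt_add_one (B + 1 + M)
    rw [hn]; linarith
  have final : v A (l * t - δ) ≤ v (l * c) (l * t) + M + (n : ℝ) := by
    calc v A (l * t - δ) ≤ v (l * c + n) (l * t - δ) := mono _ _ hAn _
      _ = v (l * c) (l * t - δ) + n := shift _ _ _
      _ ≤ v (l * c) (l * t) + M + n := by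
          have h1 := timeLip (l * c) (l * t - δ) (l * t)
          have h2 : |l * t - δ - l * t| = δ := by
            rw [show l * t - δ - l * t = -δ by ring, abs_neg]; exact abs_of_nonneg hδ0
          rw [h2] at h1
          have h3 := (abs_le.mp h1).2
          have : M * δ ≤ M := by nlinarith
          linarith
  rw [step1]
  calc v A (l * t - δ) ≤ v (l * c) (l * t) + M + (n : ℝ) := final
    _ ≤ v (l * c) (l * t) + M + (B + M + 2) := by linarith
    _ = B + v (l * c) (l * t) + 2 * (M + 1) := by ring
end

section
/- Assume (f4) and (f5). Then for all σ, l, t > 0, all c ∈ ℝⁿ and each component i ∈ {1,…,n}: v_i((σ+l)t; (σ+l)c) ≤ v_i(σt; σc) + v_i(lt; lc) + 2(‖f_i‖_∞ + C₀ + 1). -/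
open Filter Topology Set

/-- Approximate componentwise subadditivity under (f4) and (f5):
`v_i((σ+l)t; (σ+l)c) ≤ v_i(σt; σc) + v_i(lt; lc) + 2(‖f_i‖_∞ + C₀ + 1)`. -/
theorem stmt_18
    (n : ℕ) (hn : 1 < n)
    (f : (Fin n → ℝ) → ℝ → (Fin n → ℝ)) (κ : ℝ)
    (hcont : Continuous fun p : (Fin n → ℝ) × ℝ => f p.1 p.2)
    (hlip : ∀ r₁ τ₁ r₂ τ₂, ‖f r₁ τ₁ - f r₂ τ₂‖ ≤ κ * (‖r₁ - r₂‖ + |τ₁ - τ₂|))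
    (hper : ∀ (r : Fin n → ℝ) (τ : ℝ) (l : Fin n → ℤ) (k : ℤ),
      f (r + fun i => (l i : ℝ)) (τ + k) = f r τ)
    (M : Fin n → ℝ) (hM : ∀ r τ i, |f r τ i| ≤ M i)
    (v : (Fin n → ℝ) → ℝ → (Fin n → ℝ))
    (hv0 : ∀ c, v c 0 = c)
    (hv : ∀ c τ, HasDerivAt (v c) (f (v c τ) τ) τ)
    (C₀ : ℝ) (hC₀ : 0 < C₀)
    (hf5 : ∀ c₁ c₂ : Fin n → ℝ, c₁ - c₂ ∈ Set.Icc (0 : Fin n → ℝ) 1 →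
      ∀ i, ∀ τ > (0 : ℝ), v c₂ τ i - v c₁ τ i ≤ C₀) :
    ∀ σ > (0 : ℝ), ∀ l > (0 : ℝ), ∀ t > (0 : ℝ), ∀ c : Fin n → ℝ, ∀ i,
      v ((σ + l) • c) ((σ + l) * t) i ≤
        v (σ • c) (σ * t) i + v (l • c) (l * t) i + 2 * (M i + C₀ + 1) := by
  intro σ hσ l hl t ht c i
  -- κ is nonnegative
  have hκ : 0 ≤ κ := by
    have h := hlip 0 0 0 1
    have h0 := norm_nonneg (f 0 0 - f 0 1)
    simp only [sub_self, norm_zero, zero_add] at h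
    have : |(0:ℝ) - 1| = 1 := by norm_num
    rw [this, mul_one] at h
    linarith
  set K : NNReal := ⟨κ, hκ⟩ with hK
  -- uniqueness of ODE solutions
  have uniq : ∀ (F : ℝ → (Fin n → ℝ) → (Fin n → ℝ)) (u w : ℝ → (Fin n → ℝ)),
      (∀ τ, LipschitzWith K (F τ)) →
      (∀ τ, HasDerivAt u (F τ (u τ)) τ) → (∀ τ, HasDerivAt w (F τ (w τ)) τ) →
      u 0 = w 0 → ∀ T, 0 ≤ T → u T = w T := by
    intro F u w hF hu hw h0 T hT
    have := ODE_solution_unique (f := u) (g := w) (a := 0) (b := T) hF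
      (fun τ _ => (hu τ).continuousAt.continuousWithinAt)
      (fun τ _ => (hu τ).hasDerivWithinAt)
      (fun τ _ => (hw τ).continuousAt.continuousWithinAt)
      (fun τ _ => (hw τ).hasDerivWithinAt) h0
    exact this (Set.mem_Icc.mpr ⟨hT, le_rfl⟩)
  -- F₀ : the base vector field, Lipschitz in space
  have hF0 : ∀ τ, LipschitzWith K (fun r => f r τ) := by
    intro τ
    apply LipschitzWith.of_dist_le_mul
    intro r₁ r₂
    have h := hlip r₁ τ r₂ τ
    simp only [sub_self, abs_zero, add_zero] at h
    rw [dist_eq_norm, dist_eq_norm]; exact h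
  -- spatial translation by integer vectors
  have htrans : ∀ (a : Fin n → ℝ) (m : Fin n → ℤ) (T : ℝ), 0 ≤ T →
      v (a + fun j => (m j : ℝ)) T = v a T + fun j => (m j : ℝ) := by
    intro a m T hT
    have hw : ∀ τ, HasDerivAt (fun τ => v a τ + fun j => (m j : ℝ))
        (f ((v a τ + fun j => (m j : ℝ))) τ) τ := by
      intro τ
      have h1 : f ((v a τ + fun j => (m j : ℝ))) τ = f (v a τ) τ := by
        have := hper (v a τ) τ m 0
        simpa using this
      rw [h1]
      exact (hv a τ).add_const _
    refine uniq (fun τ r => f r τ) _ _ hF0 (hv _) hw ?_ T hT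
    simp [hv0]
  -- time shift by an integer
  have hshift : ∀ (a : Fin n → ℝ) (k : ℤ) (s : ℝ), 0 ≤ s →
      v a (s + (k : ℝ)) = v (v a (k : ℝ)) s := by
    intro a k s hs
    set F : ℝ → (Fin n → ℝ) → (Fin n → ℝ) := fun τ r => f r (τ + (k : ℝ)) with hFdef
    have hF : ∀ τ, LipschitzWith K (F τ) := by
      intro τ
      apply LipschitzWith.of_dist_le_mul
      intro r₁ r₂
      have h := hlip r₁ (τ + (k:ℝ)) r₂ (τ + (k:ℝ))
      simp only [sub_self, abs_zero, add_zero] at h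
      rw [dist_eq_norm, dist_eq_norm]; exact h
    have hu : ∀ τ, HasDerivAt (fun s => v a (s + (k:ℝ))) (F τ (v a (τ + (k:ℝ)))) τ := by
      intro τ
      have h1 : HasDerivAt (fun s : ℝ => s + (k:ℝ)) 1 τ := (hasDerivAt_id τ).add_const _
      have h2 := (hv a (τ + (k:ℝ))).scomp (h := fun s : ℝ => s + (k:ℝ)) (x := τ) h1
      rw [one_smul] at h2; exact h2
    have hw : ∀ τ, HasDerivAt (v (v a (k:ℝ))) (F τ (v (v a (k:ℝ)) τ)) τ := by
      intro τ
      have h1 : F τ (v (v a (k:ℝ)) τ) = f (v (v a (k:ℝ)) τ) τ := by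
        have := hper (v (v a (k:ℝ)) τ) τ 0 k
        simpa [F, ← Pi.zero_def] using this
      rw [h1]; exact hv _ τ
    have h0 : v a ((0:ℝ) + (k:ℝ)) = v (v a (k:ℝ)) 0 := by simp [hv0]
    exact uniq F _ _ hF hu hw h0 s hs
  -- componentwise Lipschitz-in-time bound
  have hMnn : 0 ≤ M i := le_trans (abs_nonneg _) (hM 0 0 i)
  have hbnd : ∀ (a : Fin n → ℝ) (s τ : ℝ), |v a τ i - v a s i| ≤ M i * |τ - s| := by
    intro a s τ
    have hder : ∀ x ∈ (Set.univ : Set ℝ),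
        HasDerivWithinAt (fun τ => v a τ i) (f (v a x) x i) Set.univ x := by
      intro x _
      exact ((hasDerivAt_pi.mp (hv a x)) i).hasDerivWithinAt
    have := convex_univ.norm_image_sub_le_of_norm_hasDerivWithin_le (f := fun τ => v a τ i)
      (f' := fun x => f (v a x) x i) hder
      (fun x _ => by simpa [Real.norm_eq_abs] using hM (v a x) x i)
      (Set.mem_univ s) (Set.mem_univ τ)
    simpa [Real.norm_eq_abs] using this
  -- setup
  set τ₁ : ℝ := σ * t with hτ₁
  set τ₂ : ℝ := l * t with hτ₂
  have hτ₁pos : 0 < τ₁ := mul_pos hσ ht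
  have hτ₂pos : 0 < τ₂ := mul_pos hl ht
  set k : ℤ := ⌈τ₁⌉ with hkdef
  have hk1 : τ₁ ≤ (k : ℝ) := Int.le_ceil τ₁
  have hk2 : (k : ℝ) ≤ τ₁ + 1 := (Int.ceil_lt_add_one τ₁).le
  have hkpos : 0 < (k : ℝ) := lt_of_lt_of_le hτ₁pos hk1
  set b : Fin n → ℝ := v ((σ + l) • c) (k : ℝ) with hbdef
  -- Step 2: b i ≤ v (σ•c) τ₁ i + ⌈l*c i⌉ + C₀ + M i
  set m' : Fin n → ℤ := fun j => ⌈l * c j⌉ with hm'def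
  have hstep2 : b i ≤ v (σ • c) (k:ℝ) i + (m' i : ℝ) + C₀ := by
    have hmem : (σ • c + fun j => ((m' j : ℝ))) - (σ + l) • c ∈
        Set.Icc (0 : Fin n → ℝ) 1 := by
      constructor <;> intro j <;>
        simp only [Pi.sub_apply, Pi.add_apply, Pi.smul_apply, smul_eq_mul, Pi.zero_apply,
          Pi.one_apply, add_mul]
      · have := Int.le_ceil (l * c j); simp [m']; linarith
      · have := (Int.ceil_lt_add_one (l * c j)).le; simp [m']; linarith
    have h5 := hf5 _ _ hmem i (k:ℝ) hkpos
    have htr := htrans (σ • c) m' (k:ℝ) hkpos.le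
    rw [htr] at h5
    simp only [Pi.add_apply] at h5
    simpa [b] using by linarith [h5]
  have hstep2' : v (σ • c) (k:ℝ) i ≤ v (σ • c) τ₁ i + M i := by
    have h := hbnd (σ • c) τ₁ (k:ℝ)
    have habs : |(k:ℝ) - τ₁| ≤ 1 := by rw [abs_of_nonneg (by linarith)]; linarith
    have := abs_le.mp h
    nlinarith [abs_nonneg ((k:ℝ) - τ₁), this.2, mul_le_mul_of_nonneg_left habs hMnn]
  -- Step 3: v b τ₂ i ≤ v (l•c) τ₂ i + ⌈b i - l*c i⌉ + C₀
  set p : Fin n → ℤ := fun j => ⌈b j - l * c j⌉ with hpdef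
  have hstep3 : v b τ₂ i ≤ v (l • c) τ₂ i + (p i : ℝ) + C₀ := by
    have hmem : (l • c + fun j => ((p j : ℝ))) - b ∈ Set.Icc (0 : Fin n → ℝ) 1 := by
      constructor <;> intro j <;>
        simp only [Pi.sub_apply, Pi.add_apply, Pi.smul_apply, smul_eq_mul, Pi.zero_apply,
          Pi.one_apply]
      · have := Int.le_ceil (b j - l * c j); simp [p]; linarith
      · have := (Int.ceil_lt_add_one (b j - l * c j)).le; simp [p]; linarith
    have h5 := hf5 _ _ hmem i τ₂ hτ₂pos
    have htr := htrans (l • c) p τ₂ hτ₂pos.le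
    rw [htr] at h5
    simp only [Pi.add_apply] at h5
    linarith [h5]
  -- semigroup property
  have hsemi : v ((σ + l) • c) (τ₂ + (k:ℝ)) = v b τ₂ :=
    hshift ((σ + l) • c) k τ₂ hτ₂pos.le
  -- final time adjustment
  have hfinal : v ((σ + l) • c) ((σ + l) * t) i ≤
      v ((σ + l) • c) (τ₂ + (k:ℝ)) i + M i := by
    have h := hbnd ((σ + l) • c) (τ₂ + (k:ℝ)) ((σ + l) * t)
    have heq : (σ + l) * t = τ₁ + τ₂ := by ring
    have habs : |(σ + l) * t - (τ₂ + (k:ℝ))| ≤ 1 := by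
      rw [heq, abs_le]; constructor <;> linarith
    have h2 := (abs_le.mp h).2
    nlinarith [mul_le_mul_of_nonneg_left habs hMnn]
  -- assemble
  have hp : (p i : ℝ) ≤ b i - l * c i + 1 := (Int.ceil_lt_add_one _).le
  have hm' : (m' i : ℝ) ≤ l * c i + 1 := (Int.ceil_lt_add_one _).le
  have hA2 : v ((σ + l) • c) (τ₂ + (k:ℝ)) i = v b τ₂ i := by rw [hsemi]
  linarith [hfinal, hA2, hstep3, hp, hstep2, hstep2', hm']
end
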